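/- arXiv:2411.04856 — 2 statements merged into one kernel-verified Lean document; each statement's English description precedes it below -/
import Mathlib

section
/- Let 𝔤 be a six-dimensional nilpotent real Lie algebra with an integrable Born structure (g, h, ω, A, B, J) such that both ±1-eigenspaces 𝔤₊ and 𝔤₋ of A are non-abelian Lie subalgebras. Then there exist Lie subalgebras 𝔤̃₊ and 𝔤̃₋ of 𝔤 with 𝔤̃₊ non-abelian and 𝔤̃₋ abelian, such that 𝔤 = 𝔤̃₊ ⊕ 𝔤̃₋ as vector spaces, h(X,Y) = 0 for all X ∈ 𝔤̃₊ and Y ∈ 𝔤̃₋, and J(𝔤̃₊) = 𝔤̃₋; in other words, there is another integrable Born structure on 𝔤 with the same metric h and complex structure J whose eigenspaces are 𝔤̃₊ ≅ 𝔥𝔢𝔦𝔰₃ and 𝔤̃₋ ≅ ℝ³. Conversely, if 𝔤 has an integrable Born structure with 𝔤₊ non-abelian and 𝔤₋ abelian, then there exist Lie subalgebras 𝔤̃₊, 𝔤̃₋, both non-abelian, with 𝔤 = 𝔤̃₊ ⊕ 𝔤̃₋, h(𝔤̃₊,𝔤̃₋) = 0, and J(𝔤̃₊) = 𝔤̃₋.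 -/
/-- A Born structure on a real Lie algebra `L`: nondegenerate symmetric bilinear forms
`g`, `h`, a nondegenerate alternating bilinear form `ω`, and endomorphisms `A`, `B`, `J`
with `g(AX,Y) = ω(X,Y)`, `g(BX,Y) = h(X,Y)`, `ω(JX,Y) = −h(X,Y)`,
`A² = B² = Id` and `J² = −Id`. -/
def IsBornStructure {L : Type*} [LieRing L] [LieAlgebra ℝ L]
    (g h ω : L →ₗ[ℝ] L →ₗ[ℝ] ℝ) (A B J : L →ₗ[ℝ] L) : Prop :=
  (∀ X Y, g X Y = g Y X) ∧ (∀ X, (∀ Y, g X Y = 0) → X = 0) ∧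
  (∀ X Y, h X Y = h Y X) ∧ (∀ X, (∀ Y, h X Y = 0) → X = 0) ∧
  (∀ X, ω X X = 0) ∧ (∀ X, (∀ Y, ω X Y = 0) → X = 0) ∧
  (∀ X Y, g (A X) Y = ω X Y) ∧
  (∀ X Y, g (B X) Y = h X Y) ∧
  (∀ X Y, ω (J X) Y = - h X Y) ∧
  (∀ X, A (A X) = X) ∧ (∀ X, B (B X) = X) ∧ (∀ X, J (J X) = -X)

/-- Integrability of a Born structure: `ω` is closed, the Nijenhuis tensor of `J`
vanishes, and the `±1`-eigenspaces of `A` are Lie subalgebras. -/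
def IsIntegrableBornStructure {L : Type*} [LieRing L] [LieAlgebra ℝ L]
    (g h ω : L →ₗ[ℝ] L →ₗ[ℝ] ℝ) (A B J : L →ₗ[ℝ] L) : Prop :=
  IsBornStructure g h ω A B J ∧
  (∀ X Y Z, ω ⁅X, Y⁆ Z + ω ⁅Y, Z⁆ X + ω ⁅Z, X⁆ Y = 0) ∧
  (∀ X Y, ⁅J X, J Y⁆ - J ⁅J X, Y⁆ - J ⁅X, J Y⁆ - ⁅X, Y⁆ = 0) ∧
  (∀ X Y, A X = X → A Y = Y → A ⁅X, Y⁆ = ⁅X, Y⁆) ∧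
  (∀ X Y, A X = -X → A Y = -Y → A ⁅X, Y⁆ = -⁅X, Y⁆)

section BornAux

variable {L : Type*} [LieRing L] [LieAlgebra ℝ L] [FiniteDimensional ℝ L]

set_option linter.unusedSectionVars false
set_option maxHeartbeats 1000000

/-- Bilinear vanishing on a spanning set propagates to the span. -/
lemma born_bilin_vanish (f : L →ₗ[ℝ] L →ₗ[ℝ] ℝ) (S : Set L)
    (hS : ∀ x ∈ S, ∀ y ∈ S, f x y = 0) :
    ∀ X ∈ Submodule.span ℝ S, ∀ Y ∈ Submodule.span ℝ S, f X Y = 0 := by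
  have step1 : ∀ x ∈ S, ∀ Y ∈ Submodule.span ℝ S, f x Y = 0 := by
    intro x hx Y hY
    have hker : Submodule.span ℝ S ≤ LinearMap.ker (f x) := by
      rw [Submodule.span_le]; intro y hy; exact hS x hx y hy
    exact hker hY
  intro X hX Y hY
  have hker : Submodule.span ℝ S ≤ LinearMap.ker (f.flip Y) := by
    rw [Submodule.span_le]; intro x hx
    simpa [LinearMap.mem_ker] using step1 x hx Y hY
  exact hker hX

lemma born_three_vanish (f : L →ₗ[ℝ] L →ₗ[ℝ] ℝ) (x y zz : L)
    (hxx : f x x = 0) (hxy : f x y = 0) (hxz : f x zz = 0)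
    (hyx : f y x = 0) (hyy : f y y = 0) (hyz : f y zz = 0)
    (hzx : f zz x = 0) (hzy : f zz y = 0) (hzz : f zz zz = 0) :
    ∀ X ∈ Submodule.span ℝ ({x, y, zz} : Set L),
      ∀ Y ∈ Submodule.span ℝ ({x, y, zz} : Set L), f X Y = 0 := by
  apply born_bilin_vanish
  rintro a (rfl | rfl | rfl) b (rfl | rfl | rfl) <;> assumption

lemma born_rank_span_singleton_le (u : L) :
    Module.finrank ℝ (Submodule.span ℝ ({u} : Set L)) ≤ 1 := by
  rcases eq_or_ne u 0 with rfl | h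
  · rw [Submodule.span_zero_singleton]; simp
  · rw [finrank_span_singleton h]

/-- Completing two independent vectors of a 3-dimensional subspace to a spanning triple. -/
lemma born_span3 (V : Submodule ℝ L) (hV3 : Module.finrank ℝ V = 3)
    (z u : L) (hz : z ∈ V) (hu : u ∈ V) (hz0 : z ≠ 0)
    (hind : u ∉ Submodule.span ℝ {z}) :
    ∃ x₃ ∈ V, Submodule.span ℝ {z, u, x₃} = V := by
  have h1 : Submodule.span ℝ {z} ≤ Submodule.span ℝ {z, u} := Submodule.span_mono (by simp)
  have humem : u ∈ Submodule.span ℝ ({z, u} : Set L) := Submodule.subset_span (by simp)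
  have hlt1 : Submodule.span ℝ {z} < Submodule.span ℝ {z, u} := by
    refine lt_of_le_of_ne h1 fun h => ?_
    rw [← h] at humem; exact hind humem
  have hr1 : Module.finrank ℝ (Submodule.span ℝ ({z} : Set L)) = 1 := finrank_span_singleton hz0
  have hr2 : 2 ≤ Module.finrank ℝ (Submodule.span ℝ ({z, u} : Set L)) := by
    have := Submodule.finrank_lt_finrank_of_lt hlt1
    omega
  have hzu : Submodule.span ℝ {z, u} ≤ V := by
    rw [Submodule.span_le]; rintro x (rfl | rfl) <;> assumption
  have hne : Submodule.span ℝ {z, u} ≠ V := by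
    intro h
    have h2 : Module.finrank ℝ (Submodule.span ℝ ({z, u} : Set L)) ≤ 2 := by
      have hsp : Submodule.span ℝ ({z, u} : Set L)
          = Submodule.span ℝ {z} ⊔ Submodule.span ℝ {u} := by
        rw [show ({z, u} : Set L) = insert z {u} from rfl, Submodule.span_insert]
      rw [hsp]
      have h3 := Submodule.finrank_sup_add_finrank_inf_eq (Submodule.span ℝ ({z} : Set L))
        (Submodule.span ℝ ({u} : Set L))
      have h4 := born_rank_span_singleton_le (L := L) u
      omega
    rw [h, hV3] at h2; omega
  obtain ⟨x₃, hx₃V, hx₃⟩ := SetLike.exists_of_lt (hzu.lt_of_ne hne)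
  refine ⟨x₃, hx₃V, ?_⟩
  have hle : Submodule.span ℝ {z, u, x₃} ≤ V := by
    rw [Submodule.span_le]; rintro x (rfl | rfl | rfl) <;> assumption
  have hx₃mem : x₃ ∈ Submodule.span ℝ ({z, u, x₃} : Set L) := Submodule.subset_span (by simp)
  have hlt2 : Submodule.span ℝ {z, u} < Submodule.span ℝ {z, u, x₃} := by
    refine lt_of_le_of_ne (Submodule.span_mono (by intro x hx; simp at hx ⊢; tauto)) fun h => ?_
    rw [← h] at hx₃mem; exact hx₃ hx₃mem
  have hr3 : 3 ≤ Module.finrank ℝ (Submodule.span ℝ ({z, u, x₃} : Set L)) := by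
    have := Submodule.finrank_lt_finrank_of_lt hlt2
    omega
  exact Submodule.eq_of_le_of_finrank_le hle (by omega)

/-- Two elements of a subspace of dimension at most one are linearly dependent. -/
lemma born_rank_le_one_dep (D : Submodule ℝ L) (hD : Module.finrank ℝ D ≤ 1) {x y : L}
    (hx : x ∈ D) (hy : y ∈ D) : ∃ a b : ℝ, (a ≠ 0 ∨ b ≠ 0) ∧ a • x = b • y := by
  rcases eq_or_ne x 0 with rfl | hx0
  · exact ⟨1, 0, Or.inl one_ne_zero, by simp⟩
  · have hle : Submodule.span ℝ {x} ≤ D := by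
      rw [Submodule.span_le]; rintro w rfl; exact hx
    have heq : Submodule.span ℝ {x} = D :=
      Submodule.eq_of_le_of_finrank_le hle (by rw [finrank_span_singleton hx0]; exact hD)
    have : y ∈ Submodule.span ℝ ({x} : Set L) := by rw [heq]; exact hy
    obtain ⟨c, hc⟩ := Submodule.mem_span_singleton.mp this
    exact ⟨c, 1, Or.inr one_ne_zero, by rw [one_smul, hc]⟩

/-- Any 3-dimensional bracket-closed subspace of a nilpotent Lie algebra has a
derived subspace of dimension at most 1 which is moreover central. -/
lemma born_derived (hnil : LieRing.IsNilpotent L)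
    (V : Submodule ℝ L) (hV3 : Module.finrank ℝ V = 3)
    (hcl : ∀ x ∈ V, ∀ y ∈ V, ⁅x, y⁆ ∈ V) :
    ∃ D : Submodule ℝ L, D ≤ V ∧ Module.finrank ℝ D ≤ 1 ∧
      (∀ x ∈ V, ∀ y ∈ V, ⁅x, y⁆ ∈ D) ∧ (∀ x ∈ V, ∀ d ∈ D, ⁅x, d⁆ = 0) := by
  classical
  set F : Submodule ℝ L → Submodule ℝ L :=
    fun D => Submodule.span ℝ {w | ∃ x ∈ V, ∃ y ∈ D, ⁅x, y⁆ = w} with hF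
  set C : ℕ → Submodule ℝ L := fun k => F^[k] V with hC
  have hC0 : C 0 = V := rfl
  have hCsucc : ∀ k, C (k + 1) = F (C k) := by
    intro k; simp only [hC, Function.iterate_succ_apply']
  have hFmono : ∀ {D D' : Submodule ℝ L}, D ≤ D' → F D ≤ F D' := by
    intro D D' h
    apply Submodule.span_mono
    rintro w ⟨x, hx, y, hy, rfl⟩
    exact ⟨x, hx, y, h hy, rfl⟩
  have hFV : F V ≤ V := by
    rw [hF]; simp only
    rw [Submodule.span_le]
    rintro w ⟨x, hx, y, hy, rfl⟩
    exact hcl x hx y hy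
  have hCle : ∀ k, C (k + 1) ≤ C k := by
    intro k; induction k with
    | zero => rw [hCsucc, hC0]; exact hFV
    | succ n ih =>
      calc C (n + 1 + 1) = F (C (n + 1)) := hCsucc _
        _ ≤ F (C n) := hFmono ih
        _ = C (n + 1) := (hCsucc _).symm
  have hCV : ∀ k, C k ≤ V := by
    intro k; induction k with
    | zero => exact le_rfl
    | succ n ih => exact le_trans (hCle n) ih
  have hCanti : ∀ k m, C (k + m) ≤ C k := by
    intro k m; induction m with
    | zero => exact le_rfl
    | succ n ih => exact le_trans (by rw [show k + (n+1) = (k + n) + 1 from rfl]; exact hCle _) ih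
  have hlcs : ∀ k, ∀ x ∈ C k, x ∈ LieModule.lowerCentralSeries ℝ L L k := by
    intro k; induction k with
    | zero => intro x _; simp
    | succ n ih =>
      intro x hx
      rw [hCsucc] at hx
      have hsub : C (n + 1) ≤ (LieModule.lowerCentralSeries ℝ L L (n + 1) : Submodule ℝ L) := by
        rw [hCsucc, hF]; simp only
        rw [Submodule.span_le]
        rintro w ⟨a, _, b, hb, rfl⟩
        have hb' : b ∈ LieModule.lowerCentralSeries ℝ L L n := ih b hb
        have hmem : ⁅a, b⁆ ∈ LieModule.lowerCentralSeries ℝ L L (n + 1) := by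
          rw [LieModule.lowerCentralSeries_succ]
          exact LieSubmodule.lie_mem_lie (LieSubmodule.mem_top a) hb'
        exact hmem
      have hx' : x ∈ (LieModule.lowerCentralSeries ℝ L L (n + 1) : Submodule ℝ L) := by
        apply hsub; rw [hCsucc]; exact hx
      exact hx'
  obtain ⟨N, hN⟩ := (LieModule.isNilpotent_iff ℝ L L).mp hnil
  have hCN : C N = ⊥ := by
    rw [eq_bot_iff]
    intro x hx
    have := hlcs N x hx
    rw [hN] at this
    simpa using this
  have hstab : ∀ k, C (k + 1) = C k → ∀ m, C (k + m) = C k := by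
    intro k hk m; induction m with
    | zero => rfl
    | succ n ih =>
      rw [show k + (n + 1) = (k + n) + 1 from rfl, hCsucc, ih, ← hCsucc, hk]
  have hkey : ∀ k, C (k + 1) = C k → C k = ⊥ := by
    intro k hk
    have h1 : C (k + N) = C k := hstab k hk N
    have h2 : C (k + N) ≤ C N := by
      rw [Nat.add_comm]; exact hCanti N k
    rw [h1, hCN] at h2
    exact le_bot_iff.mp h2
  have hbr : ∀ x ∈ V, ∀ y ∈ V, ⁅x, y⁆ ∈ C 1 := by
    intro x hx y hy
    rw [hCsucc, hC0]
    exact Submodule.subset_span ⟨x, hx, y, hy, rfl⟩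
  have hrk : Module.finrank ℝ (C 1) ≤ 1 := by
    by_contra hcon
    push_neg at hcon
    have h2rk : 2 ≤ Module.finrank ℝ (C 1) := hcon
    have hC1V : C 1 ≤ V := hCV 1
    have hC1nb : C 1 ≠ ⊥ := by
      intro h
      rw [h] at h2rk; simp at h2rk
    by_cases heq : C 1 = V
    · have hFV' : F V = C 1 := by rw [show C 1 = C (0 + 1) from rfl, hCsucc 0, hC0]
      have h21 : C (1 + 1) = C 1 := by rw [hCsucc 1, heq, hFV']; exact heq
      exact hC1nb (hkey 1 h21)
    · obtain ⟨x, hxV, hxC1⟩ := SetLike.exists_of_lt (hC1V.lt_of_ne heq)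
      have hWle : Submodule.span ℝ {x} ⊔ C 1 ≤ V := by
        refine sup_le ?_ hC1V
        rw [Submodule.span_le]; rintro w rfl; exact hxV
      have hltW : C 1 < Submodule.span ℝ {x} ⊔ C 1 := by
        refine lt_of_le_of_ne le_sup_right fun h => ?_
        have hx' : x ∈ Submodule.span ℝ {x} ⊔ C 1 :=
          Submodule.mem_sup_left (Submodule.mem_span_singleton_self x)
        rw [← h] at hx'; exact hxC1 hx'
      have hrkW : 3 ≤ Module.finrank ℝ (Submodule.span ℝ {x} ⊔ C 1 : Submodule ℝ L) := by
        have := Submodule.finrank_lt_finrank_of_lt hltW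
        omega
      have hWV : Submodule.span ℝ {x} ⊔ C 1 = V :=
        Submodule.eq_of_le_of_finrank_le hWle (by omega)
      have hmem : ∀ v ∈ V, ∀ d ∈ C 1, ⁅v, d⁆ ∈ C (1 + 1) := by
        intro v hv d hd
        rw [hCsucc]
        exact Submodule.subset_span ⟨v, hv, d, hd, rfl⟩
      have hC12 : C 1 ≤ C (1 + 1) := by
        have hFV' : C 1 = F V := by rw [show C 1 = C (0 + 1) from rfl, hCsucc 0, hC0]
        rw [hFV', hF]; simp only
        rw [Submodule.span_le]
        rintro w ⟨a, ha, b, hb, rfl⟩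
        rw [← hWV] at ha hb
        obtain ⟨a₁, ha₁, a₂, ha₂, rfl⟩ := Submodule.mem_sup.mp ha
        obtain ⟨b₁, hb₁, b₂, hb₂, rfl⟩ := Submodule.mem_sup.mp hb
        obtain ⟨r, rfl⟩ := Submodule.mem_span_singleton.mp ha₁
        obtain ⟨s, rfl⟩ := Submodule.mem_span_singleton.mp hb₁
        have t1 : ⁅x, s • x + b₂⁆ ∈ C (1 + 1) := by
          rw [lie_add, lie_smul, lie_self, smul_zero, zero_add]
          exact hmem x hxV b₂ hb₂
        have t2 : ⁅a₂, s • x + b₂⁆ ∈ C (1 + 1) := by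
          rw [lie_add, lie_smul]
          refine Submodule.add_mem _ (Submodule.smul_mem _ _ ?_) ?_
          · rw [← lie_skew]
            exact Submodule.neg_mem _ (hmem x hxV a₂ ha₂)
          · exact hmem a₂ (hC1V ha₂) b₂ hb₂
        rw [add_lie, smul_lie]
        exact Submodule.add_mem _ (Submodule.smul_mem _ _ t1) t2
      have h21 : C (1 + 1) = C 1 := le_antisymm (hCle 1) hC12
      exact hC1nb (hkey 1 h21)
  have hcent : ∀ x ∈ V, ∀ d ∈ C 1, ⁅x, d⁆ = 0 := by
    by_cases hb : C 1 = ⊥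
    · intro x _ d hd
      rw [hb, Submodule.mem_bot] at hd
      rw [hd, lie_zero]
    · have hne : C (1 + 1) ≠ C 1 := fun h => hb (hkey 1 h)
      have hlt : C (1 + 1) < C 1 := lt_of_le_of_ne (hCle 1) hne
      have hr2 : Module.finrank ℝ (C (1 + 1)) < Module.finrank ℝ (C 1) :=
        Submodule.finrank_lt_finrank_of_lt hlt
      have hz : Module.finrank ℝ (C (1 + 1)) = 0 := by omega
      have hC2b : C (1 + 1) = ⊥ := by
        rw [← Submodule.finrank_eq_zero]; exact hz
      intro x hx d hd
      have hm : ⁅x, d⁆ ∈ C (1 + 1) := by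
        rw [hCsucc]; exact Submodule.subset_span ⟨x, hx, d, hd, rfl⟩
      rw [hC2b, Submodule.mem_bot] at hm
      exact hm
  exact ⟨C 1, hCV 1, hrk, hbr, hcent⟩

lemma born_Tinj (J : L →ₗ[ℝ] L) (hJ2 : ∀ X, J (J X) = -X) (t : ℝ) :
    ∀ X : L, X + t • J X = 0 → X = 0 := by
  intro X hX
  have h1 : J X + t • J (J X) = 0 := by
    have := congrArg J hX
    rwa [map_add, map_smul, map_zero] at this
  rw [hJ2, smul_neg] at h1
  have h2 : J X = t • X := by
    rw [← sub_eq_zero, sub_eq_add_neg]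
    exact h1
  rw [h2, smul_smul] at hX
  have h3 : (1 + t * t) • X = 0 := by rw [add_smul, one_smul]; exact hX
  have h4 : (1 + t * t) ≠ 0 := by nlinarith [mul_self_nonneg t]
  simpa [smul_eq_zero, h4] using h3

lemma born_Sinj (J : L →ₗ[ℝ] L) (hJ2 : ∀ X, J (J X) = -X) (t : ℝ) :
    ∀ X : L, J X - t • X = 0 → X = 0 := by
  intro X hX
  have h2 : J X = t • X := sub_eq_zero.mp hX
  have h1 := congrArg J h2
  rw [hJ2, map_smul, h2, smul_smul] at h1
  have h3 : (1 + t * t) • X = 0 := by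
    rw [add_smul, one_smul, ← h1]
    exact add_neg_cancel X
  have h4 : (1 + t * t) ≠ 0 := by nlinarith [mul_self_nonneg t]
  simpa [smul_eq_zero, h4] using h3

lemma born_nij_flip (J : L →ₗ[ℝ] L) (hJ2 : ∀ X : L, J (J X) = -X)
    (hNij : ∀ X Y : L, ⁅J X, J Y⁆ - J ⁅J X, Y⁆ - J ⁅X, J Y⁆ - ⁅X, Y⁆ = 0)
    (U V : L) : ⁅J U, V⁆ + ⁅U, J V⁆ = J ⁅U, V⁆ - J ⁅J U, J V⁆ := by
  have h1 := congrArg J (hNij U V)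
  simp only [map_sub, map_zero, hJ2, sub_neg_eq_add] at h1
  have h1' := sub_eq_zero.mp h1
  rw [eq_sub_iff_add_eq, ← h1']
  abel

lemma born_key1 (J : L →ₗ[ℝ] L) (hJ2 : ∀ X : L, J (J X) = -X)
    (hNij : ∀ X Y : L, ⁅J X, J Y⁆ - J ⁅J X, Y⁆ - J ⁅X, J Y⁆ - ⁅X, Y⁆ = 0)
    (t : ℝ) (U V : L) :
    ⁅U + t • J U, V + t • J V⁆
      = (⁅U, V⁆ - t • J ⁅J U, J V⁆) + t • J (⁅U, V⁆ - t • J ⁅J U, J V⁆) := by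
  have hW := born_nij_flip J hJ2 hNij U V
  have e1 : ⁅U + t • J U, V + t • J V⁆
      = ⁅U, V⁆ + t • (⁅J U, V⁆ + ⁅U, J V⁆) + (t * t) • ⁅J U, J V⁆ := by
    rw [lie_add, add_lie, add_lie, lie_smul, lie_smul, smul_lie, smul_lie, smul_smul]
    module
  rw [e1, hW, map_sub, map_smul, hJ2]
  module

lemma born_key2 (J : L →ₗ[ℝ] L) (hJ2 : ∀ X : L, J (J X) = -X)
    (hNij : ∀ X Y : L, ⁅J X, J Y⁆ - J ⁅J X, Y⁆ - J ⁅X, J Y⁆ - ⁅X, Y⁆ = 0)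
    (t : ℝ) (U V : L) :
    ⁅J U - t • U, J V - t • V⁆
      = J (-(t • ⁅U, V⁆) - J ⁅J U, J V⁆) - t • (-(t • ⁅U, V⁆) - J ⁅J U, J V⁆) := by
  have hW := born_nij_flip J hJ2 hNij U V
  have e1 : ⁅J U - t • U, J V - t • V⁆
      = ⁅J U, J V⁆ - t • (⁅J U, V⁆ + ⁅U, J V⁆) + (t * t) • ⁅U, V⁆ := by
    rw [lie_sub, sub_lie, sub_lie, lie_smul, lie_smul, smul_lie, smul_lie, smul_smul]
    module
  rw [e1, hW, map_sub, map_neg, map_smul, hJ2]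
  module

theorem born_basics
    {g h ω : L →ₗ[ℝ] L →ₗ[ℝ] ℝ} {A B J : L →ₗ[ℝ] L}
    (hb : IsBornStructure g h ω A B J) :
    (∀ X : L, A (J X) = -J (A X)) ∧
    (∀ X Y : L, h X Y = -ω (J X) Y) ∧
    (∀ X Y : L, ω (J X) Y = -ω X (J Y)) ∧
    (∀ X Y : L, ω (J X) (J Y) = ω X Y) ∧
    (∀ X Y : L, A X = X → A Y = Y → ω X Y = 0) := by
  obtain ⟨gsym, gnd, hsym, hnd, walt, wnd, hgA, hgB, hwJ, hA2, hB2, hJ2⟩ := hb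
  have wskew : ∀ X Y : L, ω Y X = -ω X Y := by
    intro X Y
    have h0 := walt (X + Y)
    simp only [map_add, LinearMap.add_apply] at h0
    rw [walt X, walt Y] at h0
    linarith
  have hAJ : ∀ X : L, A (J X) = -(B X) := by
    intro X
    have key : ∀ Y, g (A (J X) + B X) Y = 0 := by
      intro Y
      rw [map_add, LinearMap.add_apply, hgA, hgB, hwJ]
      ring
    have h0 := gnd _ key
    exact eq_neg_of_add_eq_zero_left h0
  have hBneg : ∀ X : L, B X = -A (J X) := by
    intro X; rw [hAJ X, neg_neg]
  have h1 : ∀ Y : L, J (A (J Y)) = A Y := by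
    intro Y
    have h2 := hB2 Y
    rw [hBneg Y, map_neg, hBneg (A (J Y)), neg_neg] at h2
    have h3 := congrArg A h2
    rw [hA2] at h3
    exact h3
  have hAJgen : ∀ X : L, A (J X) = -J (A X) := by
    intro X
    have h4 := congrArg J (h1 X)
    rw [hJ2] at h4
    rw [← h4, neg_neg]
  have happly : ∀ X Y : L, h X Y = -ω (J X) Y := by
    intro X Y; rw [hwJ, neg_neg]
  have hωJswap : ∀ X Y : L, ω (J X) Y = -ω X (J Y) := by
    intro X Y
    calc ω (J X) Y = -h X Y := hwJ X Y
      _ = -h Y X := by rw [hsym]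
      _ = ω (J Y) X := by rw [hwJ Y X]
      _ = -ω X (J Y) := wskew X (J Y)
  have hωJJ : ∀ X Y : L, ω (J X) (J Y) = ω X Y := by
    intro X Y
    rw [hωJswap X (J Y), hJ2, map_neg, neg_neg]
  have hωpp : ∀ X Y : L, A X = X → A Y = Y → ω X Y = 0 := by
    intro X Y hX hY
    have e1 : ω X Y = g X Y := by rw [← hgA, hX]
    have e2 : ω Y X = g Y X := by rw [← hgA, hY]
    have e3 := gsym X Y
    have e4 := wskew X Y
    linarith
  exact ⟨hAJgen, happly, hωJswap, hωJJ, hωpp⟩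

lemma born_construct
    (h ω : L →ₗ[ℝ] L →ₗ[ℝ] ℝ) (J : L →ₗ[ℝ] L)
    (hJ2 : ∀ X : L, J (J X) = -X)
    (hNij : ∀ X Y : L, ⁅J X, J Y⁆ - J ⁅J X, Y⁆ - J ⁅X, J Y⁆ - ⁅X, Y⁆ = 0)
    (Gp Gm : Submodule ℝ L)
    (hJp : ∀ X ∈ Gp, J X ∈ Gm)
    (hdisj : ∀ X : L, X ∈ Gp → X ∈ Gm → X = 0)
    (hplus' : ∀ X ∈ Gp, ∀ Y ∈ Gp, ⁅X, Y⁆ ∈ Gp)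
    (hrkGp : Module.finrank ℝ Gp = 3) (hrkL : Module.finrank ℝ L = 6)
    (happly : ∀ X Y : L, h X Y = -ω (J X) Y)
    (hωJswap : ∀ X Y : L, ω (J X) Y = -ω X (J Y))
    (hωJJ : ∀ X Y : L, ω (J X) (J Y) = ω X Y)
    (hωpp : ∀ X ∈ Gp, ∀ Y ∈ Gp, ω X Y = 0)
    (t lam : ℝ)
    (hlam : ∀ X ∈ Gp, ∀ Y ∈ Gp, J ⁅J X, J Y⁆ = lam • ⁅X, Y⁆) :
    ∃ P M : LieSubalgebra ℝ L,
      (∀ X ∈ Gp, (X + t • J X) ∈ P) ∧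
      (∀ x ∈ M, ∃ X ∈ Gp, J X - t • X = x) ∧
      (∀ X ∈ Gp, ∀ Y ∈ Gp, ⁅X + t • J X, Y + t • J Y⁆
        = ((1 - t * lam) • ⁅X, Y⁆) + t • J ((1 - t * lam) • ⁅X, Y⁆)) ∧
      (∀ X ∈ Gp, (J X - t • X) ∈ M) ∧
      (∀ X ∈ Gp, ∀ Y ∈ Gp, ⁅J X - t • X, J Y - t • Y⁆
        = J ((-(t + lam)) • ⁅X, Y⁆) - t • ((-(t + lam)) • ⁅X, Y⁆)) ∧
      IsCompl P.toSubmodule M.toSubmodule ∧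
      (∀ x ∈ P, ∀ y ∈ M, h x y = 0) ∧
      Submodule.map J P.toSubmodule = M.toSubmodule := by
  classical
  set T : L →ₗ[ℝ] L := LinearMap.id + t • J with hT
  set S : L →ₗ[ℝ] L := J - t • LinearMap.id with hS
  have hTapp : ∀ X : L, T X = X + t • J X := by
    intro X; simp [hT, LinearMap.add_apply, LinearMap.smul_apply]
  have hSapp : ∀ X : L, S X = J X - t • X := by
    intro X; simp [hS, LinearMap.sub_apply, LinearMap.smul_apply]
  have Jinj : ∀ Z : L, J Z = 0 → Z = 0 := by
    intro Z hZ
    have := congrArg J hZ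
    rwa [hJ2, map_zero, neg_eq_zero] at this
  have br1 : ∀ X ∈ Gp, ∀ Y ∈ Gp, ⁅T X, T Y⁆ = T ((1 - t * lam) • ⁅X, Y⁆) := by
    intro X hX Y hY
    rw [hTapp, hTapp, born_key1 J hJ2 hNij t X Y, hlam X hX Y hY, hTapp]
    have harg : ⁅X, Y⁆ - t • (lam • ⁅X, Y⁆) = (1 - t * lam) • ⁅X, Y⁆ := by module
    rw [harg]
  have br2 : ∀ X ∈ Gp, ∀ Y ∈ Gp, ⁅S X, S Y⁆ = S ((-(t + lam)) • ⁅X, Y⁆) := by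
    intro X hX Y hY
    rw [hSapp, hSapp, born_key2 J hJ2 hNij t X Y, hlam X hX Y hY, hSapp]
    have harg : -(t • ⁅X, Y⁆) - lam • ⁅X, Y⁆ = (-(t + lam)) • ⁅X, Y⁆ := by module
    rw [harg]
  set Pm : Submodule ℝ L := Submodule.map T Gp with hPm
  set Mm : Submodule ℝ L := Submodule.map S Gp with hMm
  have hPcl : ∀ {x y : L}, x ∈ Pm → y ∈ Pm → ⁅x, y⁆ ∈ Pm := by
    intro x y hx hy
    obtain ⟨X, hX, rfl⟩ := Submodule.mem_map.mp hx
    obtain ⟨Y, hY, rfl⟩ := Submodule.mem_map.mp hy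
    rw [br1 X hX Y hY]
    exact Submodule.mem_map_of_mem (Submodule.smul_mem _ _ (hplus' X hX Y hY))
  have hMcl : ∀ {x y : L}, x ∈ Mm → y ∈ Mm → ⁅x, y⁆ ∈ Mm := by
    intro x y hx hy
    obtain ⟨X, hX, rfl⟩ := Submodule.mem_map.mp hx
    obtain ⟨Y, hY, rfl⟩ := Submodule.mem_map.mp hy
    rw [br2 X hX Y hY]
    exact Submodule.mem_map_of_mem (Submodule.smul_mem _ _ (hplus' X hX Y hY))
  set P : LieSubalgebra ℝ L := { Pm with lie_mem' := fun hx hy => hPcl hx hy } with hP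
  set M : LieSubalgebra ℝ L := { Mm with lie_mem' := fun hx hy => hMcl hx hy } with hM
  have hTinj : Function.Injective T := by
    intro a b hab
    have h0 : T (a - b) = 0 := by rw [map_sub, hab, sub_self]
    rw [hTapp] at h0
    have := born_Tinj J hJ2 t (a - b) h0
    exact sub_eq_zero.mp this
  have hSinj : Function.Injective S := by
    intro a b hab
    have h0 : S (a - b) = 0 := by rw [map_sub, hab, sub_self]
    rw [hSapp] at h0
    have := born_Sinj J hJ2 t (a - b) h0
    exact sub_eq_zero.mp this
  have hrkP : Module.finrank ℝ Pm = 3 := by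
    rw [← (Submodule.equivMapOfInjective T hTinj Gp).finrank_eq] at *
    exact hrkGp
  have hrkM : Module.finrank ℝ Mm = 3 := by
    rw [← (Submodule.equivMapOfInjective S hSinj Gp).finrank_eq] at *
    exact hrkGp
  have hdisjPM : ∀ x : L, x ∈ Pm → x ∈ Mm → x = 0 := by
    intro x hx hy
    obtain ⟨X, hX, rfl⟩ := Submodule.mem_map.mp hx
    obtain ⟨Y, hY, hSY⟩ := Submodule.mem_map.mp hy
    rw [hTapp] at hSY ⊢
    rw [hSapp] at hSY
    have h0 : (X + t • Y) + (t • J X - J Y) = 0 := by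
      rw [show (X + t • Y) + (t • J X - J Y) = (X + t • J X) - (J Y - t • Y) by module, hSY,
        sub_self]
    have hGp1 : X + t • Y ∈ Gp := Submodule.add_mem _ hX (Submodule.smul_mem _ _ hY)
    have hGm1 : t • J X - J Y ∈ Gm :=
      Submodule.sub_mem _ (Submodule.smul_mem _ _ (hJp X hX)) (hJp Y hY)
    have hGm2 : X + t • Y ∈ Gm := by
      have heq : X + t • Y = -(t • J X - J Y) := eq_neg_of_add_eq_zero_left h0
      rw [heq]; exact Submodule.neg_mem _ hGm1
    have hXY0 : X + t • Y = 0 := hdisj _ hGp1 hGm2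
    have hJ0 : t • J X - J Y = 0 := by
      rw [← h0, hXY0, zero_add]
    have hYX : Y = t • X := by
      have hju : J (t • X - Y) = 0 := by
        rw [map_sub, map_smul]; exact hJ0
      have := Jinj _ hju
      have := sub_eq_zero.mp this
      exact this.symm
    rw [hYX, smul_smul] at hXY0
    have hX0 : (1 + t * t) • X = 0 := by rw [add_smul, one_smul]; exact hXY0
    have h4 : (1 + t * t) ≠ 0 := by nlinarith [mul_self_nonneg t]
    have hX00 : X = 0 := by simpa [smul_eq_zero, h4] using hX0
    rw [hX00, map_zero, smul_zero, add_zero]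
  have hinfbot : Pm ⊓ Mm = ⊥ := by
    rw [eq_bot_iff]
    intro x hx
    rw [Submodule.mem_bot]
    exact hdisjPM x hx.1 hx.2
  have hsuptop : Pm ⊔ Mm = ⊤ := by
    have hsum := Submodule.finrank_sup_add_finrank_inf_eq Pm Mm
    rw [hinfbot] at hsum
    simp only [finrank_bot, add_zero] at hsum
    apply Submodule.eq_top_of_finrank_eq
    rw [hrkL]
    omega
  have hcompl : IsCompl Pm Mm := ⟨disjoint_iff.mpr hinfbot, codisjoint_iff.mpr hsuptop⟩
  have hJT : ∀ Z : L, J (T Z) = S Z := by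
    intro Z
    rw [hTapp, hSapp, map_add, map_smul, hJ2, smul_neg, ← sub_eq_add_neg]
  have horth : ∀ x ∈ Pm, ∀ y ∈ Mm, h x y = 0 := by
    intro x hx y hy
    obtain ⟨X, hX, rfl⟩ := Submodule.mem_map.mp hx
    obtain ⟨Y, hY, rfl⟩ := Submodule.mem_map.mp hy
    rw [happly, hJT]
    have e1 : ω (S X) (S Y)
        = ω (J X) (J Y) - t * ω (J X) Y - (t * ω X (J Y) - t * t * ω X Y) := by
      rw [hSapp, hSapp]
      simp only [map_sub, map_smul, LinearMap.sub_apply, LinearMap.smul_apply, smul_eq_mul]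
      ring
    have e2 : ω (J X) (J Y) = ω X Y := hωJJ X Y
    have e3 : ω (J X) Y = -ω X (J Y) := hωJswap X Y
    have e4 : ω X Y = 0 := hωpp X hX Y hY
    rw [e2, e3, e4] at e1
    rw [e1]; ring
  have hmapJ : Submodule.map J Pm = Mm := by
    have hcomp : J ∘ₗ T = S := LinearMap.ext hJT
    rw [hPm, ← Submodule.map_comp, hcomp]
  refine ⟨P, M, ?_, ?_, ?_, ?_, ?_, hcompl, horth, hmapJ⟩
  · intro X hX
    show X + t • J X ∈ Pm
    rw [← hTapp]
    exact Submodule.mem_map_of_mem hX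
  · intro x hx
    obtain ⟨X, hX, hXx⟩ := Submodule.mem_map.mp (show x ∈ Mm from hx)
    exact ⟨X, hX, by rw [← hSapp]; exact hXx⟩
  · intro X hX Y hY
    have hb := br1 X hX Y hY
    rw [hTapp, hTapp, hTapp] at hb
    exact hb
  · intro X hX
    show J X - t • X ∈ Mm
    rw [← hSapp]
    exact Submodule.mem_map_of_mem hX
  · intro X hX Y hY
    have hb := br2 X hX Y hY
    rw [hSapp, hSapp, hSapp] at hb
    exact hb

end BornAux

set_option maxHeartbeats 1600000 in
/-- On a six-dimensional nilpotent Lie algebra, an integrable Born structure whose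
eigenspaces are both non-abelian (`𝔥𝔢𝔦𝔰₃`) can be replaced, keeping `h` and `J`, by
one whose eigenspaces are `𝔥𝔢𝔦𝔰₃` and `ℝ³`; and conversely one of type
`(𝔥𝔢𝔦𝔰₃, ℝ³)` can be replaced by one of type `(𝔥𝔢𝔦𝔰₃, 𝔥𝔢𝔦𝔰₃)`. -/
theorem heis3_to_R3
    (L : Type*) [LieRing L] [LieAlgebra ℝ L] [FiniteDimensional ℝ L]
    (hnil : LieRing.IsNilpotent L)
    (hdim : Module.finrank ℝ L = 6)
    (g h ω : L →ₗ[ℝ] L →ₗ[ℝ] ℝ) (A B J : L →ₗ[ℝ] L)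
    (hBorn : IsIntegrableBornStructure g h ω A B J) :
    (((∃ X Y : L, A X = X ∧ A Y = Y ∧ ⁅X, Y⁆ ≠ 0) ∧
      (∃ X Y : L, A X = -X ∧ A Y = -Y ∧ ⁅X, Y⁆ ≠ 0)) →
      ∃ P M : LieSubalgebra ℝ L,
        (∃ X ∈ P, ∃ Y ∈ P, ⁅X, Y⁆ ≠ 0) ∧
        (∀ X ∈ M, ∀ Y ∈ M, ⁅X, Y⁆ = 0) ∧
        IsCompl P.toSubmodule M.toSubmodule ∧
        (∀ X ∈ P, ∀ Y ∈ M, h X Y = 0) ∧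
        Submodule.map J P.toSubmodule = M.toSubmodule) ∧
    (((∃ X Y : L, A X = X ∧ A Y = Y ∧ ⁅X, Y⁆ ≠ 0) ∧
      (∀ X Y : L, A X = -X → A Y = -Y → ⁅X, Y⁆ = 0)) →
      ∃ P M : LieSubalgebra ℝ L,
        (∃ X ∈ P, ∃ Y ∈ P, ⁅X, Y⁆ ≠ 0) ∧
        (∃ X ∈ M, ∃ Y ∈ M, ⁅X, Y⁆ ≠ 0) ∧
        IsCompl P.toSubmodule M.toSubmodule ∧
        (∀ X ∈ P, ∀ Y ∈ M, h X Y = 0) ∧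
        Submodule.map J P.toSubmodule = M.toSubmodule) := by
  classical
  obtain ⟨hb, hclosed, hNij, hplusE, hminusE⟩ := hBorn
  obtain ⟨hAJgen, happly, hωJswap, hωJJ, hωpp0⟩ := born_basics hb
  obtain ⟨gsym, gnd, hsym, hnd, walt, wnd, hgA, hgB, hwJ, hA2, hB2, hJ2⟩ := hb
  set Gp : Submodule ℝ L := LinearMap.ker (A - LinearMap.id) with hGpdef
  set Gm : Submodule ℝ L := LinearMap.ker (A + LinearMap.id) with hGmdef
  have memGp : ∀ X : L, X ∈ Gp ↔ A X = X := by
    intro X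
    simp [hGpdef, LinearMap.mem_ker, LinearMap.sub_apply, sub_eq_zero]
  have memGm : ∀ X : L, X ∈ Gm ↔ A X = -X := by
    intro X
    simp [hGmdef, LinearMap.mem_ker, LinearMap.add_apply, add_eq_zero_iff_eq_neg]
  have hJp : ∀ X ∈ Gp, J X ∈ Gm := by
    intro X hX
    rw [memGm, hAJgen, (memGp X).mp hX]
  have hJm : ∀ X ∈ Gm, J X ∈ Gp := by
    intro X hX
    rw [memGp, hAJgen, (memGm X).mp hX, map_neg, neg_neg]
  have hdisj : ∀ X : L, X ∈ Gp → X ∈ Gm → X = 0 := by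
    intro X h1 h2
    have e1 := (memGp X).mp h1
    have e2 := (memGm X).mp h2
    have e3 : X = -X := e1.symm.trans e2
    have e4 : (2 : ℝ) • X = 0 := by
      rw [two_smul]
      nth_rewrite 2 [e3]
      exact add_neg_cancel X
    have : (2 : ℝ) ≠ 0 := by norm_num
    simpa [smul_eq_zero, this] using e4
  have hplus' : ∀ X ∈ Gp, ∀ Y ∈ Gp, ⁅X, Y⁆ ∈ Gp := by
    intro X hX Y hY
    rw [memGp]
    exact hplusE X Y ((memGp X).mp hX) ((memGp Y).mp hY)
  have hminus' : ∀ X ∈ Gm, ∀ Y ∈ Gm, ⁅X, Y⁆ ∈ Gm := by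
    intro X hX Y hY
    rw [memGm]
    exact hminusE X Y ((memGm X).mp hX) ((memGm Y).mp hY)
  have hdecomp : ∀ X : L, ∃ Pp ∈ Gp, ∃ Mm ∈ Gm, X = Pp + Mm := by
    intro X
    refine ⟨(1/2 : ℝ) • (X + A X), ?_, (1/2 : ℝ) • (X - A X), ?_, ?_⟩
    · rw [memGp, map_smul, map_add, hA2]
      module
    · rw [memGm, map_smul, map_sub, hA2]
      module
    · module
  have hsumtop : Gp ⊔ Gm = ⊤ := by
    rw [eq_top_iff]
    intro X _
    obtain ⟨Pp, hPp, Mm, hMm, hX⟩ := hdecomp X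
    exact Submodule.mem_sup.mpr ⟨Pp, hPp, Mm, hMm, hX.symm⟩
  have hinfbot : Gp ⊓ Gm = ⊥ := by
    rw [eq_bot_iff]
    intro x hx
    rw [Submodule.mem_bot]
    exact hdisj x hx.1 hx.2
  have hJinj : Function.Injective J := by
    intro a b hab
    have := congrArg J hab
    rwa [hJ2, hJ2, neg_inj] at this
  have mapJGp : Submodule.map J Gp = Gm := by
    apply le_antisymm
    · rintro y ⟨X, hX, rfl⟩
      exact hJp X hX
    · intro y hy
      refine ⟨-(J y), Submodule.neg_mem _ (hJm y hy), ?_⟩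
      rw [map_neg, hJ2, neg_neg]
  have hrkGm_eq : Module.finrank ℝ Gm = Module.finrank ℝ Gp := by
    rw [← mapJGp, ← (Submodule.equivMapOfInjective J hJinj Gp).finrank_eq]
  have hsum6 : Module.finrank ℝ Gp + Module.finrank ℝ Gm = 6 := by
    have h1 := Submodule.finrank_sup_add_finrank_inf_eq Gp Gm
    rw [hsumtop, hinfbot] at h1
    rw [finrank_top, finrank_bot, hdim] at h1
    omega
  have hrkGp : Module.finrank ℝ Gp = 3 := by omega
  have hrkGm : Module.finrank ℝ Gm = 3 := by omega
  have hωppGp : ∀ X ∈ Gp, ∀ Y ∈ Gp, ω X Y = 0 := by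
    intro X hX Y hY
    exact hωpp0 X Y ((memGp X).mp hX) ((memGp Y).mp hY)
  constructor
  · -- Case (heis3, heis3) → (heis3, ℝ³)
    rintro ⟨⟨X₀, Y₀, hX₀, hY₀, hbr0⟩, ⟨X₁, Y₁, hX₁, hY₁, hbr1⟩⟩
    have hX₀Gp : X₀ ∈ Gp := (memGp X₀).mpr hX₀
    have hY₀Gp : Y₀ ∈ Gp := (memGp Y₀).mpr hY₀
    have hX₁Gm : X₁ ∈ Gm := (memGm X₁).mpr hX₁
    have hY₁Gm : Y₁ ∈ Gm := (memGm Y₁).mpr hY₁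
    obtain ⟨Dp, hDpV, hDprk, hDpbr, hDpc⟩ := born_derived hnil Gp hrkGp hplus'
    obtain ⟨Dm, hDmV, hDmrk, hDmbr, hDmc⟩ := born_derived hnil Gm hrkGm hminus'
    set z : L := ⁅X₀, Y₀⁆ with hzdef
    set w : L := ⁅X₁, Y₁⁆ with hwdef
    have hzGp : z ∈ Gp := hplus' X₀ hX₀Gp Y₀ hY₀Gp
    have hwGm : w ∈ Gm := hminus' X₁ hX₁Gm Y₁ hY₁Gm
    have hzDp : z ∈ Dp := hDpbr X₀ hX₀Gp Y₀ hY₀Gp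
    have hwDm : w ∈ Dm := hDmbr X₁ hX₁Gm Y₁ hY₁Gm
    have hDp_eq : Submodule.span ℝ {z} = Dp := by
      apply Submodule.eq_of_le_of_finrank_le
      · rw [Submodule.span_le]; rintro a rfl; exact hzDp
      · rw [finrank_span_singleton hbr0]; exact hDprk
    have hDm_eq : Submodule.span ℝ {w} = Dm := by
      apply Submodule.eq_of_le_of_finrank_le
      · rw [Submodule.span_le]; rintro a rfl; exact hwDm
      · rw [finrank_span_singleton hbr1]; exact hDmrk
    set u : L := J w with hudef
    have huGp : u ∈ Gp := hJm w hwGm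
    have hu0 : u ≠ 0 := by
      intro hh
      have h2 : J u = 0 := by rw [hh, map_zero]
      rw [hudef, hJ2] at h2
      exact hbr1 (neg_eq_zero.mp h2)
    have hφex : ∃ φ : Module.Dual ℝ L, φ z = 1 := by
      have h0 : ¬ (∀ ψ : Module.Dual ℝ L, ψ z = 0) := by
        rw [Module.forall_dual_apply_eq_zero_iff]; exact hbr0
      push_neg at h0
      obtain ⟨φ₀, hφ₀⟩ := h0
      exact ⟨(φ₀ z)⁻¹ • φ₀, by simp [LinearMap.smul_apply, smul_eq_mul, inv_mul_cancel₀ hφ₀]⟩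
    obtain ⟨φ, hφz⟩ := hφex
    have hφ'ex : ∃ ψ : Module.Dual ℝ L, ψ u = 1 := by
      have h0 : ¬ (∀ ψ : Module.Dual ℝ L, ψ u = 0) := by
        rw [Module.forall_dual_apply_eq_zero_iff]; exact hu0
      push_neg at h0
      obtain ⟨φ₀, hφ₀⟩ := h0
      exact ⟨(φ₀ u)⁻¹ • φ₀, by simp [LinearMap.smul_apply, smul_eq_mul, inv_mul_cancel₀ hφ₀]⟩
    obtain ⟨φ', hφ'u⟩ := hφ'ex
    set p : L →ₗ[ℝ] L →ₗ[ℝ] ℝ := LinearMap.mk₂ ℝ (fun X Y => φ ⁅X, Y⁆)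
      (fun m₁ m₂ n => show φ ⁅m₁ + m₂, n⁆ = φ ⁅m₁, n⁆ + φ ⁅m₂, n⁆ by rw [add_lie, map_add])
      (fun c m n => show φ ⁅c • m, n⁆ = c • φ ⁅m, n⁆ by rw [smul_lie, map_smul])
      (fun m n₁ n₂ => show φ ⁅m, n₁ + n₂⁆ = φ ⁅m, n₁⁆ + φ ⁅m, n₂⁆ by rw [lie_add, map_add])
      (fun c m n => show φ ⁅m, c • n⁆ = c • φ ⁅m, n⁆ by rw [lie_smul, map_smul]) with hpdef
    set q : L →ₗ[ℝ] L →ₗ[ℝ] ℝ := LinearMap.mk₂ ℝ (fun X Y => φ' (J ⁅J X, J Y⁆))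
      (fun m₁ m₂ n => show φ' (J ⁅J (m₁ + m₂), J n⁆)
          = φ' (J ⁅J m₁, J n⁆) + φ' (J ⁅J m₂, J n⁆) by
        rw [map_add, add_lie, map_add, map_add])
      (fun c m n => show φ' (J ⁅J (c • m), J n⁆) = c • φ' (J ⁅J m, J n⁆) by
        rw [LinearMap.map_smul J c m, smul_lie, map_smul, map_smul])
      (fun m n₁ n₂ => show φ' (J ⁅J m, J (n₁ + n₂)⁆)
          = φ' (J ⁅J m, J n₁⁆) + φ' (J ⁅J m, J n₂⁆) by
        rw [map_add, lie_add, map_add, map_add])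
      (fun c m n => show φ' (J ⁅J m, J (c • n)⁆) = c • φ' (J ⁅J m, J n⁆) by
        rw [LinearMap.map_smul J c n, lie_smul, map_smul, map_smul])
      with hqdef
    have hpapp : ∀ X Y : L, p X Y = φ ⁅X, Y⁆ := fun X Y => rfl
    have hqapp : ∀ X Y : L, q X Y = φ' (J ⁅J X, J Y⁆) := fun X Y => rfl
    have hpz : ∀ X ∈ Gp, ∀ Y ∈ Gp, ⁅X, Y⁆ = p X Y • z := by
      intro X hX Y hY
      have hm : ⁅X, Y⁆ ∈ Submodule.span ℝ {z} := by rw [hDp_eq]; exact hDpbr X hX Y hY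
      obtain ⟨cc, hcc⟩ := Submodule.mem_span_singleton.mp hm
      have hpval : p X Y = cc := by
        rw [hpapp, ← hcc, map_smul, smul_eq_mul, hφz, mul_one]
      rw [hpval, hcc]
    have hqu : ∀ X ∈ Gp, ∀ Y ∈ Gp, J ⁅J X, J Y⁆ = q X Y • u := by
      intro X hX Y hY
      have hm : ⁅J X, J Y⁆ ∈ Submodule.span ℝ {w} := by
        rw [hDm_eq]; exact hDmbr (J X) (hJp X hX) (J Y) (hJp Y hY)
      obtain ⟨cc, hcc⟩ := Submodule.mem_span_singleton.mp hm
      have hJcc : J ⁅J X, J Y⁆ = cc • u := by rw [← hcc, map_smul]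
      have hqval : q X Y = cc := by
        rw [hqapp, hJcc, map_smul, smul_eq_mul, hφ'u, mul_one]
      rw [hqval, hJcc]
    have hp₀ : p X₀ Y₀ = 1 := by
      rw [hpapp, ← hzdef]
      exact hφz
    have hpskew : ∀ X Y : L, p X Y = -p Y X := by
      intro X Y
      rw [hpapp, hpapp, ← lie_skew, map_neg]
    have hpXz : ∀ X ∈ Gp, p X z = 0 := by
      intro X hX
      rw [hpapp, hDpc X hX z hzDp, map_zero]
    have hqXu : ∀ X ∈ Gp, q X u = 0 := by
      intro X hX
      rw [hqapp]
      have hJu : J u = -w := by rw [hudef, hJ2]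
      rw [hJu, lie_neg, hDmc (J X) (hJp X hX) w hwDm, neg_zero, map_zero, map_zero]
    have hqskew : ∀ X Y : L, q X Y = -q Y X := by
      intro X Y
      rw [hqapp, hqapp, ← lie_skew (J X) (J Y), map_neg, map_neg]
    have hX₂Gp : J X₁ ∈ Gp := hJm X₁ hX₁Gm
    have hY₂Gp : J Y₁ ∈ Gp := hJm Y₁ hY₁Gm
    have hq2 : q (J X₁) (J Y₁) = 1 := by
      rw [hqapp]
      have hval : J ⁅J (J X₁), J (J Y₁)⁆ = u := by
        rw [hJ2, hJ2, neg_lie, lie_neg, neg_neg, ← hwdef, ← hudef]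
      rw [hval]; exact hφ'u
    set T1 : L →ₗ[ℝ] L := LinearMap.id + (1 : ℝ) • J with hT1
    have hT1app : ∀ Z : L, T1 Z = Z + (1 : ℝ) • J Z := by
      intro Z; simp [hT1, LinearMap.add_apply, LinearMap.smul_apply]
    have hT1inj : ∀ Z : L, T1 Z = 0 → Z = 0 := by
      intro Z hZ; rw [hT1app] at hZ; exact born_Tinj J hJ2 1 Z hZ
    have hT1injf : Function.Injective T1 := by
      intro a b hab
      have h0 : T1 (a - b) = 0 := by rw [map_sub, hab, sub_self]
      exact sub_eq_zero.mp (hT1inj _ h0)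
    set V1 : Submodule ℝ L := Submodule.map T1 Gp with hV1
    have hvmem : ∀ X ∈ Gp, ∀ Y ∈ Gp, ⁅X, Y⁆ - (1:ℝ) • J ⁅J X, J Y⁆ ∈ Gp := by
      intro X hX Y hY
      exact Submodule.sub_mem _ (hplus' X hX Y hY)
        (Submodule.smul_mem _ _ (hJm _ (hminus' (J X) (hJp X hX) (J Y) (hJp Y hY))))
    have hV1br : ∀ X Y : L,
        ⁅T1 X, T1 Y⁆ = T1 (⁅X, Y⁆ - (1:ℝ) • J ⁅J X, J Y⁆) := by
      intro X Y
      rw [hT1app, hT1app, hT1app, born_key1 J hJ2 hNij 1 X Y]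
    have hV1cl : ∀ x ∈ V1, ∀ y ∈ V1, ⁅x, y⁆ ∈ V1 := by
      intro x hx y hy
      obtain ⟨X, hX, rfl⟩ := Submodule.mem_map.mp hx
      obtain ⟨Y, hY, rfl⟩ := Submodule.mem_map.mp hy
      rw [hV1br X Y]
      exact Submodule.mem_map_of_mem (hvmem X hX Y hY)
    have hrkV1 : Module.finrank ℝ V1 = 3 := by
      rw [hV1, ← (Submodule.equivMapOfInjective T1 hT1injf Gp).finrank_eq]
      exact hrkGp
    obtain ⟨D1, hD1V, hD1rk, hD1br, hD1c⟩ := born_derived hnil V1 hrkV1 hV1cl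
    have hdep : ∀ X ∈ Gp, ∀ Y ∈ Gp, ∃ a b : ℝ, (a ≠ 0 ∨ b ≠ 0) ∧
        a • (⁅X, Y⁆ - (1:ℝ) • J ⁅J X, J Y⁆)
          = b • (⁅X₀, Y₀⁆ - (1:ℝ) • J ⁅J X₀, J Y₀⁆) := by
      intro X hX Y hY
      have hx1 : ⁅T1 X, T1 Y⁆ ∈ D1 :=
        hD1br _ (Submodule.mem_map_of_mem hX) _ (Submodule.mem_map_of_mem hY)
      have hy1 : ⁅T1 X₀, T1 Y₀⁆ ∈ D1 :=
        hD1br _ (Submodule.mem_map_of_mem hX₀Gp) _ (Submodule.mem_map_of_mem hY₀Gp)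
      obtain ⟨a, b, hab, he⟩ := born_rank_le_one_dep D1 hD1rk hx1 hy1
      rw [hV1br X Y, hV1br X₀ Y₀] at he
      refine ⟨a, b, hab, ?_⟩
      have h0 : T1 (a • (⁅X, Y⁆ - (1:ℝ) • J ⁅J X, J Y⁆)
          - b • (⁅X₀, Y₀⁆ - (1:ℝ) • J ⁅J X₀, J Y₀⁆)) = 0 := by
        rw [map_sub, map_smul, map_smul, he, sub_self]
      exact sub_eq_zero.mp (hT1inj _ h0)
    have hvform : ∀ X ∈ Gp, ∀ Y ∈ Gp,
        ⁅X, Y⁆ - (1:ℝ) • J ⁅J X, J Y⁆ = p X Y • z - q X Y • u := by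
      intro X hX Y hY
      rw [one_smul, hqu X hX Y hY, hpz X hX Y hY]
    have hcent1 : ∀ X ∈ Gp,
        ⁅X, ⁅X₀, Y₀⁆ - (1:ℝ) • J ⁅J X₀, J Y₀⁆⁆
          - (1:ℝ) • J ⁅J X, J (⁅X₀, Y₀⁆ - (1:ℝ) • J ⁅J X₀, J Y₀⁆)⁆ = 0 := by
      intro X hX
      have hd : ⁅T1 X₀, T1 Y₀⁆ ∈ D1 :=
        hD1br _ (Submodule.mem_map_of_mem hX₀Gp) _ (Submodule.mem_map_of_mem hY₀Gp)
      have h0 : ⁅T1 X, ⁅T1 X₀, T1 Y₀⁆⁆ = 0 :=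
        hD1c _ (Submodule.mem_map_of_mem hX) _ hd
      rw [hV1br X₀ Y₀, hV1br X _] at h0
      exact hT1inj _ h0
    have hfinal : ∃ lam : ℝ, ∀ X ∈ Gp, ∀ Y ∈ Gp, J ⁅J X, J Y⁆ = lam • ⁅X, Y⁆ := by
      by_cases husz : u ∈ Submodule.span ℝ {z}
      · -- u is a multiple of z
        obtain ⟨s, hs⟩ := Submodule.mem_span_singleton.mp husz
        have hs0 : s ≠ 0 := by
          intro hh; rw [hh, zero_smul] at hs; exact hu0 hs.symm
        have hqXz : ∀ X ∈ Gp, q X z = 0 := by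
          intro X hX
          have hz_eq : z = s⁻¹ • u := by
            rw [← hs, smul_smul, inv_mul_cancel₀ hs0, one_smul]
          rw [hz_eq, map_smul, smul_eq_mul, hqXu X hX, mul_zero]
        have hltz : Submodule.span ℝ {z} < Gp := by
          refine lt_of_le_of_ne ?_ ?_
          · rw [Submodule.span_le]; rintro a rfl; exact hzGp
          · intro hh
            have h5 := hrkGp
            rw [← hh, finrank_span_singleton hbr0] at h5
            omega
        obtain ⟨y₂, hy₂Gp, hy₂n⟩ := SetLike.exists_of_lt hltz
        obtain ⟨y₃, hy₃Gp, hspan⟩ := born_span3 Gp hrkGp z y₂ hzGp hy₂Gp hbr0 hy₂n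
        have hp23 : p y₂ y₃ ≠ 0 := by
          intro hp0
          have hvan := born_three_vanish p z y₂ y₃
            (hpXz z hzGp)
            (by rw [hpskew, hpXz y₂ hy₂Gp, neg_zero])
            (by rw [hpskew, hpXz y₃ hy₃Gp, neg_zero])
            (hpXz y₂ hy₂Gp)
            (by rw [hpapp, lie_self, map_zero])
            hp0
            (hpXz y₃ hy₃Gp)
            (by rw [hpskew, hp0, neg_zero])
            (by rw [hpapp, lie_self, map_zero])
          rw [hspan] at hvan
          have h00 := hvan X₀ hX₀Gp Y₀ hY₀Gp
          rw [hp₀] at h00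
          exact one_ne_zero h00
        set lam0 : ℝ := q y₂ y₃ / p y₂ y₃ with hlam0
        have hqz_all : ∀ X ∈ Gp, ∀ Y ∈ Gp, q X Y = lam0 * p X Y := by
          have happq : ∀ a b : L, (q - lam0 • p) a b = q a b - lam0 * p a b := by
            intro a b
            simp [LinearMap.sub_apply, LinearMap.smul_apply, smul_eq_mul]
          have hvan := born_three_vanish (q - lam0 • p) z y₂ y₃
            (by rw [happq, hqXz z hzGp, hpXz z hzGp, mul_zero, sub_zero])
            (by rw [happq, hqskew, hqXz y₂ hy₂Gp, hpskew, hpXz y₂ hy₂Gp]; ring)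
            (by rw [happq, hqskew, hqXz y₃ hy₃Gp, hpskew, hpXz y₃ hy₃Gp]; ring)
            (by rw [happq, hqXz y₂ hy₂Gp, hpXz y₂ hy₂Gp, mul_zero, sub_zero])
            (by rw [happq, hqapp, hpapp, lie_self, lie_self, map_zero, map_zero, map_zero]; ring)
            (by rw [happq, hlam0]; field_simp; ring)
            (by rw [happq, hqXz y₃ hy₃Gp, hpXz y₃ hy₃Gp, mul_zero, sub_zero])
            (by rw [happq, hqskew, hpskew, hlam0]; field_simp; ring)
            (by rw [happq, hqapp, hpapp, lie_self, lie_self, map_zero, map_zero, map_zero]; ring)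
          rw [hspan] at hvan
          intro X hX Y hY
          have h00 := hvan X hX Y hY
          simp only [LinearMap.sub_apply, LinearMap.smul_apply, smul_eq_mul] at h00
          linarith
        refine ⟨lam0 * s, ?_⟩
        intro X hX Y hY
        rw [hqu X hX Y hY, hpz X hX Y hY, ← hs, hqz_all X hX Y hY, smul_smul, smul_smul]
        congr 1
        ring
      · -- independent case : contradiction
        exfalso
        have hindep : ∀ a b : ℝ, a • z + b • u = 0 → a = 0 ∧ b = 0 := by
          intro a b hab
          by_cases hbz : b = 0
          · rw [hbz, zero_smul, add_zero] at hab
            have ha : a = 0 := by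
              rcases smul_eq_zero.mp hab with hcase | hcase
              · exact hcase
              · exact absurd hcase hbr0
            exact ⟨ha, hbz⟩
          · exfalso
            apply husz
            have hu_eq : u = (-(b⁻¹ * a)) • z := by
              have h1 : b • u = -(a • z) := eq_neg_of_add_eq_zero_right hab
              calc u = b⁻¹ • (b • u) := by rw [smul_smul, inv_mul_cancel₀ hbz, one_smul]
                _ = b⁻¹ • (-(a • z)) := by rw [h1]
                _ = (-(b⁻¹ * a)) • z := by rw [smul_neg, smul_smul, neg_smul]
            rw [hu_eq]
            exact Submodule.smul_mem _ _ (Submodule.mem_span_singleton_self z)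
        set c : ℝ := q X₀ Y₀ with hcdef
        have hqc : ∀ X ∈ Gp, ∀ Y ∈ Gp, q X Y = c * p X Y := by
          intro X hX Y hY
          obtain ⟨a, b, hab, he⟩ := hdep X hX Y hY
          rw [hvform X hX Y hY, hvform X₀ hX₀Gp Y₀ hY₀Gp, hp₀, one_smul, ← hcdef] at he
          have hco : (a * p X Y - b) • z + (b * c - a * q X Y) • u = 0 := by
            have hid : (a * p X Y - b) • z + (b * c - a * q X Y) • u
                = a • (p X Y • z - q X Y • u) - b • (z - c • u) := by module
            rw [hid, he, sub_self]
          obtain ⟨h1, h2⟩ := hindep _ _ hco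
          have ha : a ≠ 0 := by
            rcases hab with ha | hbne
            · exact ha
            · intro hh
              rw [hh, zero_mul] at h1
              apply hbne
              linarith
          have hmul : a * q X Y = a * (c * p X Y) := by
            have hb_eq : b = a * p X Y := by linarith
            rw [hb_eq] at h2
            nlinarith [h2]
          exact mul_left_cancel₀ ha hmul
        have hc0 : c ≠ 0 := by
          intro hh
          have h00 := hq2
          rw [hqc (J X₁) hX₂Gp (J Y₁) hY₂Gp, hh, zero_mul] at h00
          exact zero_ne_one h00
        have hw₀Gp : z - c • u ∈ Gp :=
          Submodule.sub_mem _ hzGp (Submodule.smul_mem _ _ huGp)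
        have hw₀0 : z - c • u ≠ 0 := by
          intro hh
          have h1 := hindep 1 (-c) ?_
          · exact one_ne_zero h1.1
          · rw [one_smul, neg_smul, ← sub_eq_add_neg]
            exact hh
        have hv₀ : ⁅X₀, Y₀⁆ - (1:ℝ) • J ⁅J X₀, J Y₀⁆ = z - c • u := by
          rw [hvform X₀ hX₀Gp Y₀ hY₀Gp, hp₀, one_smul, ← hcdef]
        have hpw₀ : ∀ X ∈ Gp, p X (z - c • u) = 0 := by
          intro X hX
          have h00 := hcent1 X hX
          rw [hv₀] at h00
          rw [hvform X hX _ hw₀Gp] at h00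
          rw [hqc X hX _ hw₀Gp] at h00
          have hre : p X (z - c • u) • z - (c * p X (z - c • u)) • u
              = p X (z - c • u) • (z - c • u) := by module
          rw [hre] at h00
          rcases smul_eq_zero.mp h00 with hcase | hcase
          · exact hcase
          · exact absurd hcase hw₀0
        have hpu : ∀ X ∈ Gp, p X u = 0 := by
          intro X hX
          have h1 := hpw₀ X hX
          rw [map_sub, map_smul, smul_eq_mul, hpXz X hX, zero_sub, neg_eq_zero] at h1
          rcases mul_eq_zero.mp h1 with hcase | hcase
          · exact absurd hcase hc0
          · exact hcase
        obtain ⟨x₃, hx₃Gp, hspan⟩ := born_span3 Gp hrkGp z u hzGp huGp hbr0 husz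
        have hvan := born_three_vanish p z u x₃
          (hpXz z hzGp)
          (hpu z hzGp)
          (by rw [hpskew, hpXz x₃ hx₃Gp, neg_zero])
          (hpXz u huGp)
          (hpu u huGp)
          (by rw [hpskew, hpu x₃ hx₃Gp, neg_zero])
          (hpXz x₃ hx₃Gp)
          (hpu x₃ hx₃Gp)
          (by rw [hpapp, lie_self, map_zero])
        rw [hspan] at hvan
        have h00 := hvan X₀ hX₀Gp Y₀ hY₀Gp
        rw [hp₀] at h00
        exact one_ne_zero h00
    obtain ⟨lam, hlam⟩ := hfinal
    obtain ⟨P, M, hPmem, hMsurj, hPbr, hMmem, hMbr, hcompl, horth, hmapJ⟩ :=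
      born_construct h ω J hJ2 hNij Gp Gm hJp hdisj hplus' hrkGp hdim happly hωJswap hωJJ
        hωppGp (-lam) lam hlam
    refine ⟨P, M, ?_, ?_, hcompl, horth, hmapJ⟩
    · refine ⟨X₀ + (-lam) • J X₀, hPmem X₀ hX₀Gp, Y₀ + (-lam) • J Y₀, hPmem Y₀ hY₀Gp, ?_⟩
      rw [hPbr X₀ hX₀Gp Y₀ hY₀Gp]
      intro hzero
      have h5 := born_Tinj J hJ2 (-lam) _ hzero
      rcases smul_eq_zero.mp h5 with h5 | h5
      · have hne : (1 : ℝ) - -lam * lam ≠ 0 := by nlinarith [mul_self_nonneg lam]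
        exact hne h5
      · exact hbr0 h5
    · intro x hx y hy
      obtain ⟨X, hX, rfl⟩ := hMsurj x hx
      obtain ⟨Y, hY, rfl⟩ := hMsurj y hy
      rw [hMbr X hX Y hY]
      have hcoeff : (-(-lam + lam) : ℝ) = 0 := by ring
      rw [hcoeff, zero_smul, map_zero, smul_zero, sub_zero]
  · -- Case (heis3, ℝ³) → (heis3, heis3)
    rintro ⟨⟨X₀, Y₀, hX₀, hY₀, hbr0⟩, habel⟩
    have hX₀Gp : X₀ ∈ Gp := (memGp X₀).mpr hX₀
    have hY₀Gp : Y₀ ∈ Gp := (memGp Y₀).mpr hY₀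
    have hlam : ∀ X ∈ Gp, ∀ Y ∈ Gp, J ⁅J X, J Y⁆ = (0 : ℝ) • ⁅X, Y⁆ := by
      intro X hX Y hY
      rw [habel (J X) (J Y) ((memGm _).mp (hJp X hX)) ((memGm _).mp (hJp Y hY)),
        map_zero, zero_smul]
    obtain ⟨P, M, hPmem, hMsurj, hPbr, hMmem, hMbr, hcompl, horth, hmapJ⟩ :=
      born_construct h ω J hJ2 hNij Gp Gm hJp hdisj hplus' hrkGp hdim happly hωJswap hωJJ
        hωppGp 1 0 hlam
    refine ⟨P, M, ?_, ?_, hcompl, horth, hmapJ⟩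
    · refine ⟨X₀ + (1:ℝ) • J X₀, hPmem X₀ hX₀Gp, Y₀ + (1:ℝ) • J Y₀, hPmem Y₀ hY₀Gp, ?_⟩
      rw [hPbr X₀ hX₀Gp Y₀ hY₀Gp]
      intro hzero
      have h5 := born_Tinj J hJ2 1 _ hzero
      rcases smul_eq_zero.mp h5 with h5 | h5
      · norm_num at h5
      · exact hbr0 h5
    · refine ⟨J X₀ - (1:ℝ) • X₀, hMmem X₀ hX₀Gp, J Y₀ - (1:ℝ) • Y₀, hMmem Y₀ hY₀Gp, ?_⟩
      rw [hMbr X₀ hX₀Gp Y₀ hY₀Gp]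
      intro hzero
      have h5 := born_Sinj J hJ2 1 _ hzero
      rcases smul_eq_zero.mp h5 with h5 | h5
      · norm_num at h5
      · exact hbr0 h5
end

section
/- Let 𝔤 be a six-dimensional real Lie algebra that is two-step nilpotent, i.e. [[X,Y],Z] = 0 for all X, Y, Z ∈ 𝔤, and suppose 𝔤 carries an integrable Born structure (g, h, ω, A, B, J) such that both ±1-eigenspaces of A are abelian Lie subalgebras. Then the center of 𝔤 has dimension at least 3. -/
open Module Submodule

section AuxLemmas

variable {L : Type*} [AddCommGroup L] [Module ℝ L] [FiniteDimensional ℝ L]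

/-- An isotropic subspace for a nondegenerate bilinear form has dimension at most half. -/
private lemma iso_bound (ω : L →ₗ[ℝ] L →ₗ[ℝ] ℝ)
    (hnd : ∀ X : L, (∀ Y, ω X Y = 0) → X = 0)
    (W : Submodule ℝ L) (hiso : ∀ x ∈ W, ∀ y ∈ W, ω x y = 0) :
    finrank ℝ W + finrank ℝ W ≤ finrank ℝ L := by
  have hinj : Function.Injective (ω : L →ₗ[ℝ] Module.Dual ℝ L) := by
    rw [← LinearMap.ker_eq_bot, Submodule.eq_bot_iff]
    intro x hx
    rw [LinearMap.mem_ker] at hx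
    exact hnd x fun Y => by rw [hx]; rfl
  have hmap : W.map (ω : L →ₗ[ℝ] Module.Dual ℝ L) ≤ W.dualAnnihilator := by
    rintro _ ⟨x, hxW, rfl⟩
    rw [Submodule.mem_dualAnnihilator]
    exact fun w hw => hiso x hxW w hw
  have h1 : finrank ℝ (W.map (ω : L →ₗ[ℝ] Module.Dual ℝ L)) = finrank ℝ W :=
    (LinearEquiv.finrank_eq (Submodule.equivMapOfInjective _ hinj W)).symm
  have h2 : finrank ℝ (W.map (ω : L →ₗ[ℝ] Module.Dual ℝ L)) ≤ finrank ℝ W.dualAnnihilator :=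
    Submodule.finrank_mono hmap
  have h3 : finrank ℝ (L ⧸ W) = finrank ℝ W.dualAnnihilator :=
    LinearEquiv.finrank_eq (Subspace.quotEquivAnnihilator W)
  have h4 := Submodule.finrank_quotient_add_finrank W
  omega

/-- If the elements of a ≥3-dimensional subspace killed by a linear functional all lie in a
single line, we get a contradiction. -/
private lemma aux_dim3 (W : Submodule ℝ L) (hW : 3 ≤ finrank ℝ W)
    (φ : L →ₗ[ℝ] ℝ) (x : L)
    (h : ∀ z ∈ W, φ z = 0 → ∃ r : ℝ, z = r • x) : False := by
  have hle : W ⊓ LinearMap.ker φ ≤ span ℝ {x} := by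
    rintro z ⟨hzW, hzk⟩
    obtain ⟨r, rfl⟩ := h z hzW (LinearMap.mem_ker.mp hzk)
    exact Submodule.smul_mem _ r (Submodule.mem_span_singleton_self x)
  have h1 : finrank ℝ (W ⊓ LinearMap.ker φ : Submodule ℝ L) ≤ 1 := by
    refine le_trans (Submodule.finrank_mono hle) ?_
    by_cases hx : x = 0
    · rw [hx, Submodule.span_zero_singleton, finrank_bot]; omega
    · rw [finrank_span_singleton hx]
  have key : W ⊓ LinearMap.ker φ
      = Submodule.map W.subtype (LinearMap.ker (φ.comp W.subtype)) := by
    rw [LinearMap.ker_comp, Submodule.map_comap_subtype]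
  have e : finrank ℝ (LinearMap.ker (φ.comp W.subtype))
      = finrank ℝ (Submodule.map W.subtype (LinearMap.ker (φ.comp W.subtype))) :=
    LinearEquiv.finrank_eq
      (Submodule.equivMapOfInjective _ (Submodule.injective_subtype W) _)
  have hrk := LinearMap.finrank_range_add_finrank_ker (φ.comp W.subtype)
  have hr1 : finrank ℝ (LinearMap.range (φ.comp W.subtype)) ≤ 1 := by
    have h5 := Submodule.finrank_le (LinearMap.range (φ.comp W.subtype))
    simpa [Module.finrank_self] using h5
  rw [key, ← e] at h1
  omega

end AuxLemmas

section Aux0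

/-- The case where the center meets one of the two Lagrangian eigenspaces trivially
is impossible. -/
private lemma aux0 {L : Type*} [LieRing L] [LieAlgebra ℝ L] [FiniteDimensional ℝ L]
    (ω : L →ₗ[ℝ] L →ₗ[ℝ] ℝ)
    (hnd : ∀ X : L, (∀ Y, ω X Y = 0) → X = 0)
    (hclosed : ∀ X Y Z : L, ω ⁅X, Y⁆ Z + ω ⁅Y, Z⁆ X + ω ⁅Z, X⁆ Y = 0)
    (h2step : ∀ X Y Z : L, ⁅⁅X, Y⁆, Z⁆ = 0)
    (P N : Submodule ℝ L)
    (hsplit : ∀ X : L, ∃ p ∈ P, ∃ n ∈ N, X = p + n)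
    (hPab : ∀ x ∈ P, ∀ y ∈ P, ⁅x, y⁆ = (0 : L))
    (hNab : ∀ x ∈ N, ∀ y ∈ N, ⁅x, y⁆ = (0 : L))
    (hPiso : ∀ x ∈ P, ∀ y ∈ P, ω x y = 0)
    (hNrank : 3 ≤ finrank ℝ N)
    (C : Submodule ℝ L)
    (hCmem : ∀ z : L, z ∈ C ↔ ∀ x : L, ⁅z, x⁆ = 0)
    (hCrank : finrank ℝ C ≤ 2)
    (hCN : C ⊓ N = ⊥) : False := by
  classical
  have hcent : ∀ a b : L, ⁅a, b⁆ ∈ C := fun a b => (hCmem _).mpr fun x => h2step a b x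
  set ν : L →ₗ[ℝ] (↥C →ₗ[ℝ] ℝ) := ω.flip.compl₂ C.subtype with hνdef
  have hnotinj : ¬ Function.Injective (ν.domRestrict N) := by
    intro hinj
    have h1 := LinearMap.finrank_le_finrank_of_injective hinj
    rw [Module.finrank_linearMap, Module.finrank_self, mul_one] at h1
    omega
  have hker : LinearMap.ker (ν.domRestrict N) ≠ ⊥ := fun hk =>
    hnotinj (LinearMap.ker_eq_bot.mp hk)
  obtain ⟨Z0, hZ0ker, hZ0ne⟩ := Submodule.exists_mem_ne_zero_of_ne_bot hker
  have hZmem : (Z0 : L) ∈ N := Z0.2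
  have hZne : (Z0 : L) ≠ 0 := by simpa using hZ0ne
  have hZperp : ∀ c ∈ C, ω c (Z0 : L) = 0 := by
    intro c hc
    have h0 : ν.domRestrict N Z0 = 0 := LinearMap.mem_ker.mp hZ0ker
    have h1 := DFunLike.congr_fun h0 ⟨c, hc⟩
    simpa [hνdef, LinearMap.domRestrict_apply, LinearMap.compl₂_apply,
      LinearMap.flip_apply] using h1
  have hPZ : ∀ X ∈ P, ⁅X, (Z0 : L)⁆ = 0 := by
    intro X hX
    obtain ⟨p, hp, n, hn, hpn⟩ := hsplit ⁅X, (Z0 : L)⁆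
    have hpC : p ∈ C := by
      rw [hCmem]
      intro y
      obtain ⟨py, hpy, ny, hny, rfl⟩ := hsplit y
      have h1 : ⁅p, py⁆ = 0 := hPab p hp py hpy
      have h2 : ⁅p, ny⁆ = 0 := by
        have hbz : ⁅⁅X, (Z0 : L)⁆, ny⁆ = 0 := h2step X _ ny
        rw [hpn, add_lie, hNab n hn ny hny, add_zero] at hbz
        exact hbz
      rw [lie_add, h1, h2, add_zero]
    have hnC : n ∈ C := by
      have he : n = ⁅X, (Z0 : L)⁆ - p := by rw [hpn]; abel
      rw [he]
      exact Submodule.sub_mem C (hcent _ _) hpC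
    have hn0 : n = 0 := by
      have hmem : n ∈ C ⊓ N := ⟨hnC, hn⟩
      rw [hCN] at hmem
      simpa using hmem
    have hbrP : ⁅X, (Z0 : L)⁆ ∈ P := by rw [hpn, hn0, add_zero]; exact hp
    apply hnd
    intro Y
    obtain ⟨py, hpy, ny, hny, rfl⟩ := hsplit Y
    have hY1 : ω ⁅X, (Z0 : L)⁆ py = 0 := hPiso _ hbrP py hpy
    have hY2 : ω ⁅X, (Z0 : L)⁆ ny = 0 := by
      have hcl := hclosed X (Z0 : L) ny
      rw [hNab _ hZmem _ hny] at hcl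
      have h3 : (⁅ny, X⁆ : L) = -⁅X, ny⁆ := by rw [← lie_skew]
      rw [h3] at hcl
      simp only [map_zero, LinearMap.zero_apply, map_neg, LinearMap.neg_apply] at hcl
      have h4 : ω ⁅X, ny⁆ (Z0 : L) = 0 := hZperp _ (hcent X ny)
      linarith
    rw [map_add, hY1, hY2, add_zero]
  have hZC : (Z0 : L) ∈ C := by
    rw [hCmem]
    intro y
    obtain ⟨py, hpy, ny, hny, rfl⟩ := hsplit y
    have h1 : ⁅(Z0 : L), py⁆ = 0 := by
      rw [← lie_skew, hPZ py hpy, neg_zero]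
    have h2 : ⁅(Z0 : L), ny⁆ = 0 := hNab _ hZmem _ hny
    rw [lie_add, h1, h2, add_zero]
  have hmem : (Z0 : L) ∈ C ⊓ N := ⟨hZC, hZmem⟩
  rw [hCN] at hmem
  exact hZne (by simpa using hmem)

end Aux0

set_option maxHeartbeats 2000000 in
/-- A six-dimensional two-step nilpotent Lie algebra with an integrable Born structure
whose both Lagrangian subalgebras are abelian has center of dimension at least three. -/
theorem center_ge_three
    (L : Type*) [LieRing L] [LieAlgebra ℝ L] [FiniteDimensional ℝ L]
    (hdim : Module.finrank ℝ L = 6)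
    (h2step : ∀ X Y Z : L, ⁅⁅X, Y⁆, Z⁆ = 0)
    (g h ω : L →ₗ[ℝ] L →ₗ[ℝ] ℝ) (A B J : L →ₗ[ℝ] L)
    (hBorn : IsIntegrableBornStructure g h ω A B J)
    (habP : ∀ X Y : L, A X = X → A Y = Y → ⁅X, Y⁆ = 0)
    (habM : ∀ X Y : L, A X = -X → A Y = -Y → ⁅X, Y⁆ = 0) :
    3 ≤ Module.finrank ℝ ↥(LieAlgebra.center ℝ L) := by
  obtain ⟨⟨hg_sym, hg_nd, hh_sym, hh_nd, hω_alt, hω_nd, hgA, hgB, hωJ, hA2, hB2, hJ2⟩,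
    hclosed, hNij, hintP, hintM⟩ := hBorn
  clear hintP hintM hh_nd hg_nd
  ------------------------------------------------------------------
  -- basic consequences of the Born structure axioms
  ------------------------------------------------------------------
  have hskew : ∀ X Y : L, ω X Y = - ω Y X := by
    intro X Y
    have h0 := hω_alt (X + Y)
    simp only [map_add, LinearMap.add_apply] at h0
    rw [hω_alt X, hω_alt Y] at h0
    linarith
  have hJinj : ∀ X : L, J X = 0 → X = 0 := by
    intro X hX
    have h0 := hJ2 X
    rw [hX, map_zero] at h0
    simpa using h0.symm
  have hgω : ∀ X Y : L, g X Y = ω (A X) Y := by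
    intro X Y
    have h0 := hgA (A X) Y
    rwa [hA2] at h0
  have hAB : ∀ X : L, A (B X) = - J X := by
    intro X
    have key : ∀ Y, ω (A (B X) + J X) Y = 0 := by
      intro Y
      have e1 : ω (A (B X)) Y = h X Y := by rw [← hgω, hgB]
      have e2 : ω (J X) Y = - h X Y := hωJ X Y
      simp only [map_add, LinearMap.add_apply, e1, e2]
      ring
    exact eq_neg_of_add_eq_zero_left (hω_nd _ key)
  have hBAJ : ∀ X : L, B X = - A (J X) := by
    intro X
    calc B X = A (A (B X)) := (hA2 _).symm
    _ = A (- J X) := by rw [hAB]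
    _ = - A (J X) := map_neg A _
  have hAJAJ : ∀ X : L, A (J (A (J X))) = X := by
    intro X
    have h1 := hB2 X
    rw [hBAJ X, map_neg, hBAJ (A (J X)), neg_neg] at h1
    exact h1
  have hJAJ : ∀ X : L, J (A (J X)) = A X := by
    intro X
    have h1 := congrArg A (hAJAJ X)
    rwa [hA2] at h1
  have hAJ : ∀ X : L, A (J X) = - J (A X) := by
    intro X
    have h1 := congrArg J (hJAJ X)
    rw [hJ2] at h1
    rw [← h1, neg_neg]
  have hJsymm : ∀ X Y : L, ω (J X) Y = ω (J Y) X := by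
    intro X Y
    rw [hωJ, hωJ, hh_sym]
  have hJJ : ∀ X Y : L, ω (J X) (J Y) = ω X Y := by
    intro X Y
    calc ω (J X) (J Y) = ω (J (J Y)) X := hJsymm X (J Y)
    _ = ω (-Y) X := by rw [hJ2]
    _ = - ω Y X := by rw [map_neg, LinearMap.neg_apply]
    _ = ω X Y := (hskew X Y).symm
  ------------------------------------------------------------------
  -- the eigenspaces of A
  ------------------------------------------------------------------
  set Lp : Submodule ℝ L := LinearMap.ker (A - LinearMap.id) with hLpdef
  set Lm : Submodule ℝ L := LinearMap.ker (A + LinearMap.id) with hLmdef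
  have memLp : ∀ x : L, x ∈ Lp ↔ A x = x := by
    intro x
    rw [hLpdef, LinearMap.mem_ker, LinearMap.sub_apply, LinearMap.id_apply, sub_eq_zero]
  have memLm : ∀ x : L, x ∈ Lm ↔ A x = -x := by
    intro x
    rw [hLmdef, LinearMap.mem_ker, LinearMap.add_apply, LinearMap.id_apply,
      add_eq_zero_iff_eq_neg]
  have hsplit : ∀ X : L, ∃ p ∈ Lp, ∃ n ∈ Lm, X = p + n := by
    intro X
    refine ⟨(2⁻¹ : ℝ) • (X + A X), ?_, (2⁻¹ : ℝ) • (X - A X), ?_, ?_⟩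
    · rw [memLp, map_smul, map_add, hA2, add_comm]
    · rw [memLm, map_smul, map_sub, hA2, ← smul_neg, neg_sub]
    · rw [← smul_add]
      match_scalars <;> norm_num
  have hPM0 : Lp ⊓ Lm = ⊥ := by
    rw [eq_bot_iff]
    rintro x ⟨hxp, hxm⟩
    have h1 : x = -x := ((memLp x).mp hxp).symm.trans ((memLm x).mp hxm)
    have h2 : (2 : ℝ) • x = 0 := by
      rw [two_smul]
      nth_rewrite 1 [h1]
      exact neg_add_cancel x
    rw [Submodule.mem_bot]
    rcases smul_eq_zero.mp h2 with h' | h'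
    · norm_num at h'
    · exact h'
  have habP' : ∀ x ∈ Lp, ∀ y ∈ Lp, ⁅x, y⁆ = (0 : L) := fun x hx y hy =>
    habP x y ((memLp x).mp hx) ((memLp y).mp hy)
  have habM' : ∀ x ∈ Lm, ∀ y ∈ Lm, ⁅x, y⁆ = (0 : L) := fun x hx y hy =>
    habM x y ((memLm x).mp hx) ((memLm y).mp hy)
  have hisoP : ∀ x ∈ Lp, ∀ y ∈ Lp, ω x y = 0 := by
    intro x hx y hy
    have e1 : g x y = ω x y := by rw [hgω, (memLp x).mp hx]
    have e2 : g y x = ω y x := by rw [hgω, (memLp y).mp hy]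
    have e3 := hskew x y
    have e4 := hg_sym x y
    linarith
  have hisoM : ∀ x ∈ Lm, ∀ y ∈ Lm, ω x y = 0 := by
    intro x hx y hy
    have e1 : g x y = - ω x y := by
      rw [hgω, (memLm x).mp hx, map_neg, LinearMap.neg_apply]
    have e2 : g y x = - ω y x := by
      rw [hgω, (memLm y).mp hy, map_neg, LinearMap.neg_apply]
    have e3 := hskew x y
    have e4 := hg_sym x y
    linarith
  have hnd2 : ∀ x : L, (∀ y ∈ Lp, ω x y = 0) → (∀ y ∈ Lm, ω x y = 0) → x = 0 := by
    intro x h1 h2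
    apply hω_nd
    intro Y
    obtain ⟨p, hp, n, hn, rfl⟩ := hsplit Y
    rw [map_add, h1 p hp, h2 n hn, add_zero]
  have hJP : ∀ x ∈ Lp, J x ∈ Lm := by
    intro x hx
    rw [memLm, hAJ, (memLp x).mp hx]
  have hJM : ∀ x ∈ Lm, J x ∈ Lp := by
    intro x hx
    rw [memLp, hAJ, (memLm x).mp hx, map_neg, neg_neg]
  ------------------------------------------------------------------
  -- dimensions of the eigenspaces
  ------------------------------------------------------------------
  have htop : Lp ⊔ Lm = ⊤ := by
    rw [eq_top_iff]
    intro x _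
    obtain ⟨p, hp, n, hn, rfl⟩ := hsplit x
    exact Submodule.add_mem_sup hp hn
  have hsum6 : finrank ℝ Lp + finrank ℝ Lm = 6 := by
    have h0 := Submodule.finrank_sup_add_finrank_inf_eq Lp Lm
    rw [htop, hPM0, finrank_top, finrank_bot, hdim] at h0
    omega
  have hbp := iso_bound ω hω_nd Lp hisoP
  have hbm := iso_bound ω hω_nd Lm hisoM
  rw [hdim] at hbp hbm
  have hLp3 : finrank ℝ Lp = 3 := by omega
  have hLm3 : finrank ℝ Lm = 3 := by omega
  ------------------------------------------------------------------
  -- the center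
  ------------------------------------------------------------------
  set Csub : Submodule ℝ L := LieSubmodule.toSubmodule (LieAlgebra.center ℝ L) with hCdef
  have hCmem : ∀ z : L, z ∈ Csub ↔ ∀ x : L, ⁅z, x⁆ = 0 := by
    intro z
    rw [hCdef, LieSubmodule.mem_toSubmodule, LieModule.mem_maxTrivSubmodule]
    constructor
    · intro h0 x
      rw [← lie_skew, h0 x, neg_zero]
    · intro h0 x
      rw [← lie_skew, h0 x, neg_zero]
  have hfr : Module.finrank ℝ ↥(LieAlgebra.center ℝ L) = finrank ℝ Csub := by
    rw [hCdef]
    exact LinearEquiv.finrank_eq (LinearEquiv.refl ℝ _)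
  by_contra hcon
  push_neg at hcon
  rw [hfr] at hcon
  have hc2 : finrank ℝ Csub ≤ 2 := by omega
  have hbrC : ∀ a b : L, ⁅a, b⁆ ∈ Csub := fun a b => (hCmem _).mpr fun x => h2step a b x
  have hCsplitPN : ∀ c ∈ Csub, ∃ p ∈ Csub ⊓ Lp, ∃ n ∈ Csub ⊓ Lm, c = p + n := by
    intro c hc
    obtain ⟨p, hp, n, hn, rfl⟩ := hsplit c
    have hpC : p ∈ Csub := by
      rw [hCmem]
      intro y
      obtain ⟨py, hpy, ny, hny, rfl⟩ := hsplit y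
      have h1 : ⁅p, py⁆ = 0 := habP' p hp py hpy
      have h2 : ⁅p, ny⁆ = 0 := by
        have hcy : ⁅p + n, ny⁆ = 0 := (hCmem _).mp hc ny
        rw [add_lie, habM' n hn ny hny, add_zero] at hcy
        exact hcy
      rw [lie_add, h1, h2, add_zero]
    have hnC : n ∈ Csub := by
      rw [hCmem]
      intro y
      have h1 : ⁅p + n, y⁆ = 0 := (hCmem _).mp hc y
      have h2 : ⁅p, y⁆ = 0 := (hCmem _).mp hpC y
      rw [add_lie, h2, zero_add] at h1
      exact h1
    exact ⟨p, ⟨hpC, hp⟩, n, ⟨hnC, hn⟩, rfl⟩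
  have hCsup : (Csub ⊓ Lp) ⊔ (Csub ⊓ Lm) = Csub := by
    apply le_antisymm (sup_le inf_le_left inf_le_left)
    intro c hc
    obtain ⟨p, hp, n, hn, rfl⟩ := hCsplitPN c hc
    exact Submodule.add_mem_sup hp hn
  have hCinf : (Csub ⊓ Lp) ⊓ (Csub ⊓ Lm) = ⊥ := by
    rw [eq_bot_iff]
    rintro x ⟨⟨-, h1⟩, -, h2⟩
    have : x ∈ Lp ⊓ Lm := ⟨h1, h2⟩
    rw [hPM0] at this
    exact this
  have hCsum : finrank ℝ (Csub ⊓ Lp : Submodule ℝ L) + finrank ℝ (Csub ⊓ Lm : Submodule ℝ L)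
      = finrank ℝ Csub := by
    have h0 := Submodule.finrank_sup_add_finrank_inf_eq (Csub ⊓ Lp) (Csub ⊓ Lm)
    rw [hCsup, hCinf, finrank_bot] at h0
    omega
  ------------------------------------------------------------------
  -- case analysis
  ------------------------------------------------------------------
  rcases Nat.eq_zero_or_pos (finrank ℝ (Csub ⊓ Lm : Submodule ℝ L)) with hm0 | hmpos
  · -- C ∩ Lm = 0
    exact aux0 ω hω_nd hclosed h2step Lp Lm hsplit habP' habM' hisoP (by omega) Csub hCmem hc2
      (Submodule.finrank_eq_zero.mp hm0)
  rcases Nat.eq_zero_or_pos (finrank ℝ (Csub ⊓ Lp : Submodule ℝ L)) with hp0 | hppos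
  · -- C ∩ Lp = 0
    refine aux0 ω hω_nd hclosed h2step Lm Lp ?_ habM' habP' hisoM (by omega) Csub hCmem hc2
      (Submodule.finrank_eq_zero.mp hp0)
    intro X
    obtain ⟨p, hp, n, hn, rfl⟩ := hsplit X
    exact ⟨n, hn, p, hp, add_comm p n⟩
  -- now both intersections are one-dimensional
  have hCp1 : finrank ℝ (Csub ⊓ Lp : Submodule ℝ L) = 1 := by omega
  have hCm1 : finrank ℝ (Csub ⊓ Lm : Submodule ℝ L) = 1 := by omega
  obtain ⟨u, huCL, hu0⟩ : ∃ u : L, u ∈ Csub ⊓ Lp ∧ u ≠ 0 := by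
    have hne : Csub ⊓ Lp ≠ ⊥ := by
      intro h0
      rw [h0, finrank_bot] at hCp1
      omega
    obtain ⟨b, hb, hb0⟩ := Submodule.exists_mem_ne_zero_of_ne_bot hne
    exact ⟨b, hb, hb0⟩
  obtain ⟨v, hvCL, hv0⟩ : ∃ v : L, v ∈ Csub ⊓ Lm ∧ v ≠ 0 := by
    have hne : Csub ⊓ Lm ≠ ⊥ := by
      intro h0
      rw [h0, finrank_bot] at hCm1
      omega
    obtain ⟨b, hb, hb0⟩ := Submodule.exists_mem_ne_zero_of_ne_bot hne
    exact ⟨b, hb, hb0⟩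
  have huC : u ∈ Csub := huCL.1
  have huLp : u ∈ Lp := huCL.2
  have hvC : v ∈ Csub := hvCL.1
  have hvLm : v ∈ Lm := hvCL.2
  have hu_c : ∀ x : L, ⁅u, x⁆ = 0 := (hCmem u).mp huC
  have hv_c : ∀ x : L, ⁅v, x⁆ = 0 := (hCmem v).mp hvC
  have hspanu : Csub ⊓ Lp = span ℝ {u} := by
    symm
    apply Submodule.eq_of_le_of_finrank_le
    · rw [Submodule.span_le, Set.singleton_subset_iff]
      exact huCL
    · rw [hCp1, finrank_span_singleton hu0]
  have hspanv : Csub ⊓ Lm = span ℝ {v} := by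
    symm
    apply Submodule.eq_of_le_of_finrank_le
    · rw [Submodule.span_le, Set.singleton_subset_iff]
      exact hvCL
    · rw [hCm1, finrank_span_singleton hv0]
  have hCpU : ∀ c ∈ Csub, c ∈ Lp → ∃ r : ℝ, c = r • u := by
    intro c hc hcp
    have : c ∈ Csub ⊓ Lp := ⟨hc, hcp⟩
    rw [hspanu] at this
    obtain ⟨r, hr⟩ := Submodule.mem_span_singleton.mp this
    exact ⟨r, hr.symm⟩
  have hCmU : ∀ c ∈ Csub, c ∈ Lm → ∃ r : ℝ, c = r • v := by
    intro c hc hcm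
    have : c ∈ Csub ⊓ Lm := ⟨hc, hcm⟩
    rw [hspanv] at this
    obtain ⟨r, hr⟩ := Submodule.mem_span_singleton.mp this
    exact ⟨r, hr.symm⟩
  ------------------------------------------------------------------
  -- normalized dual vectors W₀ ∈ Lm, Y₀ ∈ Lp
  ------------------------------------------------------------------
  obtain ⟨W₀, hW₀m, hωuW₀⟩ : ∃ w, w ∈ Lm ∧ ω u w = 1 := by
    have hex : ∃ w ∈ Lm, ω u w ≠ 0 := by
      by_contra hno
      push_neg at hno
      exact hu0 (hnd2 u (fun y hy => hisoP u huLp y hy) hno)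
    obtain ⟨w1, hw1, hw1ne⟩ := hex
    refine ⟨(ω u w1)⁻¹ • w1, Submodule.smul_mem _ _ hw1, ?_⟩
    rw [map_smul, smul_eq_mul]
    exact inv_mul_cancel₀ hw1ne
  obtain ⟨Y₀, hY₀p, hωvY₀⟩ : ∃ y, y ∈ Lp ∧ ω v y = 1 := by
    have hex : ∃ y ∈ Lp, ω v y ≠ 0 := by
      by_contra hno
      push_neg at hno
      exact hv0 (hnd2 v hno (fun y hy => hisoM v hvLm y hy))
    obtain ⟨w1, hw1, hw1ne⟩ := hex
    refine ⟨(ω v w1)⁻¹ • w1, Submodule.smul_mem _ _ hw1, ?_⟩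
    rw [map_smul, smul_eq_mul]
    exact inv_mul_cancel₀ hw1ne
  have hωvW₀ : ω v W₀ = 0 := hisoM v hvLm W₀ hW₀m
  have hωuY₀ : ω u Y₀ = 0 := hisoP u huLp Y₀ hY₀p
  -- decomposition of central elements
  have hcdec : ∀ c ∈ Csub, c = (ω c W₀) • u + (ω c Y₀) • v := by
    intro c hc
    obtain ⟨p, hp, n, hn, rfl⟩ := hCsplitPN c hc
    obtain ⟨r, rfl⟩ := hCpU p hp.1 hp.2
    obtain ⟨r', rfl⟩ := hCmU n hn.1 hn.2
    have e1 : ω (r • u + r' • v) W₀ = r := by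
      simp only [map_add, map_smul, LinearMap.add_apply, LinearMap.smul_apply, smul_eq_mul,
        hωuW₀, hωvW₀]
      ring
    have e2 : ω (r • u + r' • v) Y₀ = r' := by
      simp only [map_add, map_smul, LinearMap.add_apply, LinearMap.smul_apply, smul_eq_mul,
        hωuY₀, hωvY₀]
      ring
    rw [e1, e2]
  ------------------------------------------------------------------
  -- closedness symmetries
  ------------------------------------------------------------------
  have hsym1 : ∀ (X : L), ∀ Z ∈ Lm, ∀ W ∈ Lm, ω ⁅X, Z⁆ W = ω ⁅X, W⁆ Z := by
    intro X Z hZ W hW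
    have hcl := hclosed X Z W
    rw [habM' Z hZ W hW] at hcl
    have h3 : (⁅W, X⁆ : L) = -⁅X, W⁆ := by rw [← lie_skew]
    rw [h3] at hcl
    simp only [map_zero, LinearMap.zero_apply, map_neg, LinearMap.neg_apply] at hcl
    linarith
  have hsym2 : ∀ X ∈ Lp, ∀ Y ∈ Lp, ∀ Z : L, ω ⁅X, Z⁆ Y = ω ⁅Y, Z⁆ X := by
    intro X hX Y hY Z
    have hcl := hclosed X Z Y
    rw [habP' Y hY X hX] at hcl
    have h3 : (⁅Z, Y⁆ : L) = -⁅Y, Z⁆ := by rw [← lie_skew]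
    rw [h3] at hcl
    simp only [map_zero, LinearMap.zero_apply, map_neg, LinearMap.neg_apply] at hcl
    linarith
  ------------------------------------------------------------------
  -- structure of the bracket
  ------------------------------------------------------------------
  have hBR : ∀ X ∈ Lp, ∀ Z ∈ Lm,
      ⁅X, Z⁆ = (ω ⁅X, W₀⁆ W₀ * ω u Z) • u + (ω v X * ω ⁅Y₀, Z⁆ Y₀) • v := by
    intro X hX Z hZ
    have hdecXZ := hcdec ⁅X, Z⁆ (hbrC X Z)
    have e1 : ω ⁅X, Z⁆ W₀ = ω ⁅X, W₀⁆ W₀ * ω u Z := by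
      rw [hsym1 X Z hZ W₀ hW₀m]
      have hd := hcdec ⁅X, W₀⁆ (hbrC X W₀)
      conv_lhs => rw [hd]
      simp only [map_add, map_smul, LinearMap.add_apply, LinearMap.smul_apply, smul_eq_mul,
        hisoM v hvLm Z hZ]
      ring
    have e2 : ω ⁅X, Z⁆ Y₀ = ω v X * ω ⁅Y₀, Z⁆ Y₀ := by
      rw [hsym2 X hX Y₀ hY₀p Z]
      have hd := hcdec ⁅Y₀, Z⁆ (hbrC Y₀ Z)
      conv_lhs => rw [hd]
      simp only [map_add, map_smul, LinearMap.add_apply, LinearMap.smul_apply, smul_eq_mul,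
        hisoP u huLp X hX]
      ring
    rw [e1, e2] at hdecXZ
    exact hdecXZ
  -- criteria for centrality
  have hcrit : ∀ X ∈ Lp, (∀ Z ∈ Lm, ⁅X, Z⁆ = 0) → X ∈ Csub := by
    intro X hX h0
    rw [hCmem]
    intro y
    obtain ⟨p, hp, n, hn, rfl⟩ := hsplit y
    rw [lie_add, habP' X hX p hp, h0 n hn, add_zero]
  have hcritM : ∀ Z ∈ Lm, (∀ X ∈ Lp, ⁅X, Z⁆ = 0) → Z ∈ Csub := by
    intro Z hZ h0
    rw [hCmem]
    intro y
    obtain ⟨p, hp, n, hn, rfl⟩ := hsplit y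
    have h1 : ⁅Z, p⁆ = 0 := by rw [← lie_skew, h0 p hp, neg_zero]
    rw [lie_add, h1, habM' Z hZ n hn, add_zero]
  ------------------------------------------------------------------
  -- non-degeneracy of the two coefficient functions
  ------------------------------------------------------------------
  obtain ⟨X₁, hX₁, Z₁, hZ₁, hH1⟩ :
      ∃ X ∈ Lp, ∃ Z ∈ Lm, ω ⁅X, W₀⁆ W₀ * ω u Z ≠ 0 := by
    by_contra hno
    push_neg at hno
    refine aux_dim3 Lp (by omega) (ω v) u ?_
    intro z hz hvz
    refine hCpU z ?_ hz
    apply hcrit z hz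
    intro Z hZ
    rw [hBR z hz Z hZ, hno z hz Z hZ, hvz]
    simp
  obtain ⟨X₂, hX₂, Z₂, hZ₂, hH2⟩ :
      ∃ X ∈ Lp, ∃ Z ∈ Lm, ω v X * ω ⁅Y₀, Z⁆ Y₀ ≠ 0 := by
    by_contra hno
    push_neg at hno
    refine aux_dim3 Lm (by omega) (ω u) v ?_
    intro z hz huz
    refine hCmU z ?_ hz
    apply hcritM z hz
    intro X hX
    rw [hBR X hX z hz, hno X hX z hz, huz]
    simp
  have hξX₁ : ω ⁅X₁, W₀⁆ W₀ ≠ 0 := left_ne_zero_of_mul hH1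
  have hηZ₂ : ω ⁅Y₀, Z₂⁆ Y₀ ≠ 0 := right_ne_zero_of_mul hH2
  ------------------------------------------------------------------
  -- ω u v = 0 and vanishing of the coefficients on u, v
  ------------------------------------------------------------------
  have huv : ω u v = 0 := by
    have hcl := hclosed X₁ Z₁ v
    have h1 : ⁅Z₁, v⁆ = (0 : L) := habM' Z₁ hZ₁ v hvLm
    have h2 : ⁅v, X₁⁆ = (0 : L) := hv_c X₁
    rw [h1, h2] at hcl
    simp only [map_zero, LinearMap.zero_apply, add_zero] at hcl
    rw [hBR X₁ hX₁ Z₁ hZ₁] at hcl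
    simp only [map_add, map_smul, LinearMap.add_apply, LinearMap.smul_apply, smul_eq_mul,
      hω_alt v, mul_zero, add_zero] at hcl
    rcases mul_eq_zero.mp hcl with h3 | h3
    · exact absurd h3 hH1
    · exact h3
  have hξu : ω ⁅u, W₀⁆ W₀ = 0 := by rw [hu_c W₀, map_zero, LinearMap.zero_apply]
  have hηv : ω ⁅Y₀, v⁆ Y₀ = 0 := by
    have h1 : ⁅Y₀, v⁆ = (0 : L) := by rw [← lie_skew, hv_c Y₀, neg_zero]
    rw [h1, map_zero, LinearMap.zero_apply]
  ------------------------------------------------------------------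
  -- consequences of the Nijenhuis condition
  ------------------------------------------------------------------
  have NP : ∀ a ∈ Lp, ∀ b ∈ Lp, ⁅a, J b⁆ = ⁅b, J a⁆ := by
    intro a ha b hb
    have hN := hNij a b
    rw [habP a b ((memLp a).mp ha) ((memLp b).mp hb),
      habM (J a) (J b) ((memLm _).mp (hJP a ha)) ((memLm _).mp (hJP b hb))] at hN
    rw [zero_sub, sub_zero, sub_eq_add_neg, ← neg_add] at hN
    have hsum : (⁅J a, b⁆ + ⁅a, J b⁆ : L) = 0 := by
      apply hJinj
      rw [map_add]
      exact neg_eq_zero.mp hN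
    have h1 : (⁅a, J b⁆ : L) = -⁅J a, b⁆ := eq_neg_of_add_eq_zero_right hsum
    rw [h1]
    exact lie_skew b (J a)
  have NM : ∀ a ∈ Lm, ∀ b ∈ Lm, ⁅J a, b⁆ = ⁅J b, a⁆ := by
    intro a ha b hb
    have hN := hNij a b
    rw [habM a b ((memLm a).mp ha) ((memLm b).mp hb),
      habP (J a) (J b) ((memLp _).mp (hJM a ha)) ((memLp _).mp (hJM b hb))] at hN
    rw [zero_sub, sub_zero, sub_eq_add_neg, ← neg_add] at hN
    have hsum : (⁅J a, b⁆ + ⁅a, J b⁆ : L) = 0 := by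
      apply hJinj
      rw [map_add]
      exact neg_eq_zero.mp hN
    have h1 : (⁅J a, b⁆ : L) = -⁅a, J b⁆ := eq_neg_of_add_eq_zero_left hsum
    rw [h1]
    exact lie_skew (J b) a
  have F' : ∀ a ∈ Lp, ∀ b ∈ Lp,
      ω ⁅a, W₀⁆ W₀ * ω u (J b) = ω ⁅b, W₀⁆ W₀ * ω u (J a) := by
    intro a ha b hb
    have e := NP a ha b hb
    rw [hBR a ha (J b) (hJP b hb), hBR b hb (J a) (hJP a ha)] at e
    have e2 := congrArg (fun w => ω w W₀) e
    simp only [map_add, map_smul, LinearMap.add_apply, LinearMap.smul_apply, smul_eq_mul,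
      hωuW₀, hωvW₀, mul_one, mul_zero, add_zero] at e2
    exact e2
  have E' : ∀ a ∈ Lm, ∀ b ∈ Lm,
      ω v (J a) * ω ⁅Y₀, b⁆ Y₀ = ω v (J b) * ω ⁅Y₀, a⁆ Y₀ := by
    intro a ha b hb
    have e := NM a ha b hb
    rw [hBR (J a) (hJM a ha) b hb, hBR (J b) (hJM b hb) a ha] at e
    have e2 := congrArg (fun w => ω w Y₀) e
    simp only [map_add, map_smul, LinearMap.add_apply, LinearMap.smul_apply, smul_eq_mul,
      hωvY₀, hωuY₀, mul_one, mul_zero, zero_add] at e2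
    exact e2
  ------------------------------------------------------------------
  -- J u is proportional to the ξ-functional, J v to the η-functional
  ------------------------------------------------------------------
  set lam : ℝ := ω u (J X₁) / ω ⁅X₁, W₀⁆ W₀ with hlamdef
  have hωuJ : ∀ b ∈ Lp, ω u (J b) = ω ⁅b, W₀⁆ W₀ * lam := by
    intro b hb
    have h0 := F' X₁ hX₁ b hb
    rw [hlamdef]
    field_simp
    linear_combination h0
  have hJu_pair : ∀ b ∈ Lp, ω (J u) b = -(ω ⁅b, W₀⁆ W₀ * lam) := by
    intro b hb
    have h1 := hωuJ b hb
    have h2 : ω (J b) u = ω (J u) b := hJsymm b u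
    have h3 : ω u (J b) = - ω (J b) u := hskew u (J b)
    linarith
  have hlam0 : lam ≠ 0 := by
    intro h0
    have hJu0 : J u = 0 := by
      apply hnd2 (J u)
      · intro y hy
        rw [hJu_pair y hy, h0, mul_zero, neg_zero]
      · intro y hy
        exact hisoM (J u) (hJP u huLp) y hy
    exact hu0 (hJinj u hJu0)
  set mu : ℝ := ω v (J Z₂) / ω ⁅Y₀, Z₂⁆ Y₀ with hmudef
  have hωvJ : ∀ a ∈ Lm, ω v (J a) = ω ⁅Y₀, a⁆ Y₀ * mu := by
    intro a ha
    have h0 := E' a ha Z₂ hZ₂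
    rw [hmudef]
    field_simp
    linear_combination h0
  have hJv_pair : ∀ a ∈ Lm, ω (J v) a = -(ω ⁅Y₀, a⁆ Y₀ * mu) := by
    intro a ha
    have h1 := hωvJ a ha
    have h2 : ω (J a) v = ω (J v) a := hJsymm a v
    have h3 : ω v (J a) = - ω (J a) v := hskew v (J a)
    linarith
  have hmu0 : mu ≠ 0 := by
    intro h0
    have hJv0 : J v = 0 := by
      apply hnd2 (J v)
      · intro y hy
        exact hisoP (J v) (hJM v hvLm) y hy
      · intro y hy
        rw [hJv_pair y hy, h0, mul_zero, neg_zero]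
    exact hv0 (hJinj v hJv0)
  ------------------------------------------------------------------
  -- linear independence of u, J v, v, J u
  ------------------------------------------------------------------
  have hJvu : ∀ r : ℝ, J v ≠ r • u := by
    intro r hr
    refine aux_dim3 Lm (by omega) (ω u) v ?_
    intro z hz huz
    have hηz : ω ⁅Y₀, z⁆ Y₀ = 0 := by
      have h1 := hJv_pair z hz
      rw [hr] at h1
      simp only [map_smul, LinearMap.smul_apply, smul_eq_mul] at h1
      rw [huz, mul_zero] at h1
      have h2 : ω ⁅Y₀, z⁆ Y₀ * mu = 0 := by linarith
      exact (mul_eq_zero.mp h2).resolve_right hmu0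
    refine hCmU z ?_ hz
    apply hcritM z hz
    intro X hX
    rw [hBR X hX z hz, huz, hηz]
    simp
  have hJuv : ∀ r : ℝ, J u ≠ r • v := by
    intro r hr
    refine aux_dim3 Lp (by omega) (ω v) u ?_
    intro z hz hvz
    have hξz : ω ⁅z, W₀⁆ W₀ = 0 := by
      have h1 := hJu_pair z hz
      rw [hr] at h1
      simp only [map_smul, LinearMap.smul_apply, smul_eq_mul] at h1
      rw [hvz, mul_zero] at h1
      have h2 : ω ⁅z, W₀⁆ W₀ * lam = 0 := by linarith
      exact (mul_eq_zero.mp h2).resolve_right hlam0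
    refine hCpU z ?_ hz
    apply hcrit z hz
    intro Z hZ
    rw [hBR z hz Z hZ, hξz, hvz]
    simp
  have hli : LinearIndependent ℝ ![u, J v, v, J u] := by
    rw [Fintype.linearIndependent_iff]
    intro gc hg
    rw [Fin.sum_univ_four] at hg
    simp only [Matrix.cons_val_zero, Matrix.cons_val_one, Matrix.head_cons,
      Matrix.cons_val_two, Matrix.cons_val_three, Matrix.tail_cons] at hg
    have hp : gc 0 • u + gc 1 • J v ∈ Lp :=
      Submodule.add_mem _ (Submodule.smul_mem _ _ huLp) (Submodule.smul_mem _ _ (hJM v hvLm))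
    have hn : gc 2 • v + gc 3 • J u ∈ Lm :=
      Submodule.add_mem _ (Submodule.smul_mem _ _ hvLm) (Submodule.smul_mem _ _ (hJP u huLp))
    have hpn : (gc 0 • u + gc 1 • J v) + (gc 2 • v + gc 3 • J u) = 0 := by
      rw [← add_assoc]; exact hg
    have hpmem : gc 0 • u + gc 1 • J v ∈ Lp ⊓ Lm := by
      constructor
      · exact hp
      · have h1 : gc 0 • u + gc 1 • J v = -(gc 2 • v + gc 3 • J u) :=
          eq_neg_of_add_eq_zero_left hpn
        rw [h1]
        exact Submodule.neg_mem _ hn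
    rw [hPM0] at hpmem
    have hpz : gc 0 • u + gc 1 • J v = 0 := by simpa using hpmem
    have hnz : gc 2 • v + gc 3 • J u = 0 := by
      rw [hpz, zero_add] at hpn
      exact hpn
    have hg1 : gc 1 = 0 := by
      by_contra h1
      have e : gc 1 • J v = -(gc 0 • u) := eq_neg_of_add_eq_zero_right hpz
      have e2 : J v = ((gc 1)⁻¹ * (- gc 0)) • u := by
        rw [mul_smul, neg_smul, ← e, smul_smul, inv_mul_cancel₀ h1, one_smul]
      exact hJvu _ e2
    have hg0 : gc 0 = 0 := by
      rw [hg1, zero_smul, add_zero] at hpz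
      exact (smul_eq_zero.mp hpz).resolve_right hu0
    have hg3 : gc 3 = 0 := by
      by_contra h3
      have e : gc 3 • J u = -(gc 2 • v) := eq_neg_of_add_eq_zero_right hnz
      have e2 : J u = ((gc 3)⁻¹ * (- gc 2)) • v := by
        rw [mul_smul, neg_smul, ← e, smul_smul, inv_mul_cancel₀ h3, one_smul]
      exact hJuv _ e2
    have hg2 : gc 2 = 0 := by
      rw [hg3, zero_smul, add_zero] at hnz
      exact (smul_eq_zero.mp hnz).resolve_right hv0
    intro i
    fin_cases i
    · exact hg0
    · exact hg1
    · exact hg2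
    · exact hg3
  ------------------------------------------------------------------
  -- the span of u, J v, v, J u is 4-dimensional and isotropic: contradiction
  ------------------------------------------------------------------
  set U : Submodule ℝ L := span ℝ (Set.range ![u, J v, v, J u]) with hUdef
  have hU4 : finrank ℝ U = 4 := by
    rw [hUdef, finrank_span_eq_card hli]
    simp
  have hωuJu : ω u (J u) = 0 := by
    rw [hωuJ u huLp, hξu, zero_mul]
  have hωvJv : ω (J v) v = 0 := by
    rw [hJv_pair v hvLm, hηv, zero_mul, neg_zero]
  have hpair : ∀ i j, ω (![u, J v, v, J u] i) (![u, J v, v, J u] j) = 0 := by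
    have t01 : ω u (J v) = 0 := hisoP u huLp (J v) (hJM v hvLm)
    have t02 : ω u v = 0 := huv
    have t03 : ω u (J u) = 0 := hωuJu
    have t12 : ω (J v) v = 0 := hωvJv
    have t13 : ω (J v) (J u) = 0 := by
      rw [hJJ v u, hskew v u, huv, neg_zero]
    have t23 : ω v (J u) = 0 := hisoM v hvLm (J u) (hJP u huLp)
    intro i j
    fin_cases i <;> fin_cases j <;>
      simp only [Matrix.cons_val_zero, Matrix.cons_val_one, Matrix.head_cons,
        Matrix.cons_val_two, Matrix.cons_val_three, Matrix.tail_cons]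
    · exact hω_alt u
    · exact t01
    · exact t02
    · exact t03
    · show ω (J v) u = 0
      linarith [hskew (J v) u, t01]
    · exact hω_alt (J v)
    · exact t12
    · exact t13
    · show ω v u = 0
      linarith [hskew v u, t02]
    · show ω v (J v) = 0
      linarith [hskew v (J v), t12]
    · exact hω_alt v
    · exact t23
    · show ω (J u) u = 0
      linarith [hskew (J u) u, t03]
    · show ω (J u) (J v) = 0
      linarith [hskew (J u) (J v), t13]
    · show ω (J u) v = 0
      linarith [hskew (J u) v, t23]
    · exact hω_alt (J u)
  have hUiso : ∀ x ∈ U, ∀ y ∈ U, ω x y = 0 := by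
    have step1 : ∀ i, ∀ y ∈ U, ω (![u, J v, v, J u] i) y = 0 := by
      intro i y hy
      induction hy using Submodule.span_induction with
      | mem x hx =>
        obtain ⟨j, rfl⟩ := hx
        exact hpair i j
      | zero => exact map_zero _
      | add x y _ _ hx hy => rw [map_add, hx, hy, add_zero]
      | smul a x _ hx => rw [map_smul, hx, smul_zero]
    intro x hx y hy
    induction hx using Submodule.span_induction with
    | mem x hxm =>
      obtain ⟨j, rfl⟩ := hxm
      exact step1 j y hy
    | zero => rw [map_zero, LinearMap.zero_apply]
    | add a b _ _ ha hb => rw [map_add, LinearMap.add_apply, ha, hb, add_zero]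
    | smul a x _ hx => rw [map_smul, LinearMap.smul_apply, hx, smul_zero]
  have hfinal := iso_bound ω hω_nd U hUiso
  rw [hU4, hdim] at hfinal
  omega
end
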